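/- arXiv:0901.2358 — 3 statements merged into one kernel-verified Lean document; each statement's English description precedes it below -/
import Mathlib

section
/- There is a constant C > 0 such that for all t ≥ 1 and all k > 0, the first time derivative of the mode function satisfies |∂v/∂t(t,k)| ≤ C·t·ω(k)^{1/2}, where ω(k) = √(1+k²). -/
open Complex MeasureTheory Filter
open scoped RealInnerProductSpace

noncomputable section

/-- Three-dimensional Euclidean space. -/
abbrev V3 : Type := EuclideanSpace ℝ (Fin 3)

/-- The Bessel function of complex order `α`:
`J_α(x) = Σ_{n=0}^∞ ((−1)^n/(n!·Γ(α+n+1)))·exp((α+2n)·log(x/2))`. -/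
def besselJ (α : ℂ) (x : ℝ) : ℂ :=
  ∑' n : ℕ, ((-1 : ℂ) ^ n / ((n.factorial : ℂ) * Complex.Gamma (α + (n : ℂ) + 1))) *
    Complex.exp ((α + 2 * (n : ℂ)) * (Real.log (x / 2) : ℂ))

/-- The Hankel function of the first kind. -/
def hankel1 (α : ℂ) (x : ℝ) : ℂ :=
  (besselJ (-α) x - Complex.exp (-(Complex.I * (Real.pi : ℂ) * α)) * besselJ α x) /
    (Complex.I * Complex.sin (α * (Real.pi : ℂ)))

/-- The Hankel function of the second kind. -/
def hankel2 (α : ℂ) (x : ℝ) : ℂ :=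
  (Complex.exp (Complex.I * (Real.pi : ℂ) * α) * besselJ α x - besselJ (-α) x) /
    (Complex.I * Complex.sin (α * (Real.pi : ℂ)))

/-- `μ = √((mR)² − 9/4)`. -/
def modeMu (m R : ℝ) : ℝ := Real.sqrt ((m * R) ^ 2 - 9 / 4)

/-- `ν = iμ`. -/
def modeNu (m R : ℝ) : ℂ := Complex.I * (modeMu m R : ℂ)

/-- The mode function `v(t,k) = e^{−μπ/2}·t^{3/2}·H^{(1)}_ν(kt)`. -/
def modeV (m R t k : ℝ) : ℂ :=
  (Real.exp (-(modeMu m R * Real.pi / 2)) : ℂ) * ((t ^ ((3 : ℝ) / 2) : ℝ) : ℂ) *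
    hankel1 (modeNu m R) (k * t)

/-- `v′(t,k) = ∂v/∂t (t,k)`. -/
def modeV' (m R t k : ℝ) : ℂ := deriv (fun s => modeV m R s k) t

/-- `ω(k) = √(1+k²)`. -/
def omegaK (k : ℝ) : ℝ := Real.sqrt (1 + k ^ 2)

/-- The Fourier transform on `ℝ³`. -/
def ft (g : V3 → ℂ) (k : V3) : ℂ :=
  (((2 * Real.pi) ^ (-(3 : ℝ) / 2) : ℝ) : ℂ) *
    ∫ x : V3, Complex.exp (-(Complex.I) * (⟪k, x⟫ : ℂ)) * g x

/-- The inverse Fourier transform on `ℝ³`. -/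
def ift (g : V3 → ℂ) (x : V3) : ℂ :=
  (((2 * Real.pi) ^ (-(3 : ℝ) / 2) : ℝ) : ℂ) *
    ∫ k : V3, Complex.exp (Complex.I * (⟪k, x⟫ : ℂ)) * g k

/-- The map `K_t` on the Fourier side, applied to the Fourier transforms `f̃, h̃`
of the Cauchy data:
`K_t(f,h)(k) = (πi/(4t³))·[t·f̃(k)·conj(v′(t,|k|)) − R·h̃(k)·conj(v(t,|k|))]`. -/
def ktAux (m R t : ℝ) (ftil htil : V3 → ℂ) (k : V3) : ℂ :=
  ((Real.pi : ℂ) * Complex.I / (4 * (t : ℂ) ^ 3)) *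
    ((t : ℂ) * ftil k * (starRingEnd ℂ) (modeV' m R t ‖k‖) -
      (R : ℂ) * htil k * (starRingEnd ℂ) (modeV m R t ‖k‖))

/-- `K_t` applied to real Cauchy data `(f,h)`. -/
def ktFun (m R t : ℝ) (f h : V3 → ℝ) : V3 → ℂ :=
  ktAux m R t (ft fun x => (f x : ℂ)) (ft fun x => (h x : ℂ))

/-- The Fourier transform of the first component of the pair `L_tψ`:
`f̃_t(k) = v(t,|k|)·ψ(k) + conj(v(t,|k|))·conj(ψ(−k))`. -/
def ltF (m R t : ℝ) (ψ : V3 → ℂ) (k : V3) : ℂ :=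
  modeV m R t ‖k‖ * ψ k + (starRingEnd ℂ) (modeV m R t ‖k‖) * (starRingEnd ℂ) (ψ (-k))

/-- The Fourier transform of the second component of the pair `L_tψ`:
`h̃_t(k) = (t/R)·[v′(t,|k|)·ψ(k) + conj(v′(t,|k|))·conj(ψ(−k))]`. -/
def ltH (m R t : ℝ) (ψ : V3 → ℂ) (k : V3) : ℂ :=
  ((t / R : ℝ) : ℂ) *
    (modeV' m R t ‖k‖ * ψ k + (starRingEnd ℂ) (modeV' m R t ‖k‖) * (starRingEnd ℂ) (ψ (-k)))

/-- The solution `u(t,x⃗)` built from the coefficient function `ψ`: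
`u(t,x⃗) = (2π)^{−3/2}·∫ e^{ik⃗·x⃗}·[v(t,|k⃗|)·ψ(k⃗) + conj(v(t,|k⃗|))·conj(ψ(−k⃗))] dk⃗`. -/
def uSol (m R : ℝ) (ψ : V3 → ℂ) (t : ℝ) (x : V3) : ℂ :=
  (((2 * Real.pi) ^ (-(3 : ℝ) / 2) : ℝ) : ℂ) *
    ∫ k : V3, Complex.exp (Complex.I * (⟪k, x⟫ : ℂ)) *
      (modeV m R t ‖k‖ * ψ k + (starRingEnd ℂ) (modeV m R t ‖k‖) * (starRingEnd ℂ) (ψ (-k)))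

/-- The spatial Laplacian, as the sum of the second partial derivatives along
the coordinate directions. -/
def lap3 (w : V3 → ℂ) (x : V3) : ℂ :=
  ∑ i : Fin 3, iteratedDeriv 2 (fun s : ℝ => w (x + s • EuclideanSpace.single i (1 : ℝ))) 0

/-- The square of the Sobolev-type norm `‖(f,h)‖_{1/2}`, expressed in terms of the
Fourier transforms `f̃, h̃` of the data:
`‖(f,h)‖_{1/2}² = ∫ ω(|k⃗|)·|f̃(k⃗)|² dk⃗ + ∫ ω(|k⃗|)⁻¹·|h̃(k⃗)|² dk⃗`. -/
def halfNormSq (ftil htil : V3 → ℂ) : ℝ :=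
  (∫ k : V3, omegaK ‖k‖ * ‖ftil k‖ ^ 2) + ∫ k : V3, (omegaK ‖k‖)⁻¹ * ‖htil k‖ ^ 2

/-- The Sobolev-type norm `‖(f,h)‖_{1/2}` (arguments are the Fourier transforms). -/
def halfNorm (ftil htil : V3 → ℂ) : ℝ := Real.sqrt (halfNormSq ftil htil)

/-- The `L²(ℝ³)` norm. -/
def l2Norm (g : V3 → ℂ) : ℝ := Real.sqrt (∫ k : V3, ‖g k‖ ^ 2)

/-- The transformed potential operator `V̂` with (Fourier-transformed) potential `W`:
`(V̂ψ)(k⃗) = −(2π)^{3/2}·R·(πi/4)·conj(v(1,|k⃗|))·(W ∗ g_ψ)(k⃗)` where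
`g_ψ(k⃗) = v(1,|k⃗|)·ψ(k⃗) + conj(v(1,|k⃗|))·conj(ψ(−k⃗))`. -/
def vHatOp (m R : ℝ) (W : V3 → ℂ) (ψ : V3 → ℂ) (k : V3) : ℂ :=
  ((-((2 * Real.pi) ^ ((3 : ℝ) / 2)) * R : ℝ) : ℂ) * ((Real.pi : ℂ) * Complex.I / 4) *
    (starRingEnd ℂ) (modeV m R 1 ‖k‖) * ∫ y : V3, W y * ltF m R 1 ψ (k - y)

/-- The free transformed evolution `Û₀(a,b) = K₁ ∘ L_a ∘ K_b ∘ L₁` on `L²(ℝ³)`. -/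
def u0Hat (m R a b : ℝ) (ψ : V3 → ℂ) : V3 → ℂ :=
  ktAux m R 1 (ltF m R a (ktAux m R b (ltF m R 1 ψ) (ltH m R 1 ψ)))
    (ltH m R a (ktAux m R b (ltF m R 1 ψ) (ltH m R 1 ψ)))

/-- The inner chain `V̂(s)·V̂(s₂)···V̂(s_{j+1})·Û₀(s_{j+1},1)ψ` of the `n`-th Dyson term,
with the nested integrals `∫₁^{s}···` built in; `W s` is the spatial Fourier transform
of the potential at time `s`. -/
def dysonM (m R : ℝ) (W : ℝ → V3 → ℂ) : ℕ → ℝ → (V3 → ℂ) → V3 → ℂ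
  | 0, s, ψ => vHatOp m R (W s) (u0Hat m R s 1 ψ)
  | j + 1, s, ψ => vHatOp m R (W s) fun k => ∫ r in Set.Ioc (1 : ℝ) s, dysonM m R W j r ψ k

/-- The `n`-th Dyson term
`∫₁^t∫₁^{s₁}···∫₁^{s_{n−1}} Û₀(t,s₁)·V̂(s₁)···V̂(s_n)·Û₀(s_n,1)ψ ds_n···ds₁` (for `n ≥ 1`). -/
def dysonT (m R : ℝ) (W : ℝ → V3 → ℂ) (n : ℕ) (t : ℝ) (ψ : V3 → ℂ) : V3 → ℂ := fun k =>
  ∫ s in Set.Ioc (1 : ℝ) t, u0Hat m R t s (dysonM m R W (n - 1) s ψ) k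

noncomputable section BesselAux

namespace BesselAux

def besselJx (α : ℂ) (x : ℝ) : ℂ :=
  ∑' n : ℕ, ((-1 : ℂ) ^ n / ((n.factorial : ℂ) * Complex.Gamma (α + (n : ℂ) + 1))) *
    Complex.exp ((α + 2 * (n : ℂ)) * (Real.log (x / 2) : ℂ))

def aJ (α : ℂ) (n : ℕ) : ℂ :=
  (-1 : ℂ) ^ n / ((n.factorial : ℂ) * Complex.Gamma (α + (n : ℂ) + 1))

def bJ (α : ℂ) (n : ℕ) : ℂ := α + 2 * (n : ℂ)

def EJ (α : ℂ) (n : ℕ) (x : ℝ) : ℂ :=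
  Complex.exp (bJ α n * (Real.log (x / 2) : ℂ))

lemma besselJx_eq (α : ℂ) (x : ℝ) : besselJx α x = ∑' n, aJ α n * EJ α n x := rfl

variable {α : ℂ} {μ : ℝ}

lemma arg_ne (him : α.im ≠ 0) (z : ℂ) (hz : z.im = 0) : α + (z : ℂ) ≠ 0 := by
  intro h
  have := congrArg Complex.im h
  simp [hz] at this
  exact him this

lemma gamma_ne (him : α.im ≠ 0) (n : ℕ) : Complex.Gamma (α + (n : ℂ) + 1) ≠ 0 := by
  apply Complex.Gamma_ne_zero
  intro m h
  have := congrArg Complex.im h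
  simp at this
  exact him this

lemma aJ_ne (him : α.im ≠ 0) (n : ℕ) : aJ α n ≠ 0 := by
  apply div_ne_zero
  · exact pow_ne_zero _ (by norm_num)
  · exact mul_ne_zero (Nat.cast_ne_zero.2 (Nat.factorial_ne_zero n)) (gamma_ne him n)

lemma aJ_succ (him : α.im ≠ 0) (n : ℕ) :
    aJ α (n + 1) = -aJ α n / (((n : ℂ) + 1) * (α + (n : ℂ) + 1)) := by
  have h0 : α + (n : ℂ) + 1 ≠ 0 := by
    intro h
    have := congrArg Complex.im h
    simp at this
    exact him this
  have hg : Complex.Gamma (α + ((n : ℕ) + 1 : ℕ) + 1)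
      = (α + (n : ℂ) + 1) * Complex.Gamma (α + (n : ℂ) + 1) := by
    push_cast
    rw [show α + ((n : ℂ) + 1) + 1 = (α + (n : ℂ) + 1) + 1 by ring,
      Complex.Gamma_add_one _ h0]
  have hfac : ((n + 1).factorial : ℂ) = ((n : ℂ) + 1) * (n.factorial : ℂ) := by
    rw [Nat.factorial_succ]; push_cast; ring
  have hn1 : ((n : ℂ) + 1) ≠ 0 := by
    have h5 : ((n + 1 : ℕ) : ℂ) ≠ 0 := Nat.cast_ne_zero.2 (Nat.succ_ne_zero n)
    push_cast at h5
    exact h5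
  have hfne : ((n : ℕ).factorial : ℂ) ≠ 0 := Nat.cast_ne_zero.2 (Nat.factorial_ne_zero n)
  have hgne := gamma_ne him n
  simp only [aJ, hg, hfac, pow_succ]
  field_simp

lemma norm_aJ_succ (him : α.im ≠ 0) (n : ℕ) :
    ‖aJ α (n + 1)‖ = ‖aJ α n‖ / (((n : ℝ) + 1) * ‖α + (n : ℂ) + 1‖) := by
  rw [aJ_succ him n, norm_div, norm_neg, norm_mul]
  congr 2
  rw [show ((n : ℂ) + 1) = ((n + 1 : ℝ) : ℂ) by push_cast; ring, Complex.norm_real,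
    Real.norm_of_nonneg (by positivity)]

/-- Master summability. -/
lemma summable_master (hre : α.re = 0) (him : α.im ≠ 0) {R : ℝ} (hR : 0 ≤ R) :
    Summable (fun n : ℕ => ‖aJ α n‖ * (‖α‖ + 2 * n + 2) ^ 2 * R ^ n) := by
  set W : ℕ → ℝ := fun n => ‖aJ α n‖ * (‖α‖ + 2 * n + 2) ^ 2 * R ^ n with hW
  have hWnn : ∀ n, 0 ≤ W n := fun n => by positivity
  apply summable_of_ratio_norm_eventually_le (r := 1 / 2) (by norm_num)
  filter_upwards [eventually_ge_atTop ⌈8 * R⌉₊] with n hn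
  have h8R : 8 * R ≤ ((n : ℝ) + 1) ^ 2 := by
    have h1 : 8 * R ≤ (⌈8 * R⌉₊ : ℝ) := Nat.le_ceil _
    have h2 : ((⌈8 * R⌉₊ : ℕ) : ℝ) ≤ (n : ℝ) := Nat.cast_le.2 hn
    nlinarith [Nat.cast_nonneg (α := ℝ) n]
  have hbase : ‖α + (n : ℂ) + 1‖ ≥ (n : ℝ) + 1 := by
    have := Complex.re_le_norm (α + (n : ℂ) + 1)
    simp only [Complex.add_re, Complex.ofReal_re, Complex.one_re, Complex.natCast_re, hre] at this
    linarith
  have hrec : ‖aJ α (n + 1)‖ ≤ ‖aJ α n‖ / ((n : ℝ) + 1) ^ 2 := by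
    rw [norm_aJ_succ him n]
    apply div_le_div_of_nonneg_left (norm_nonneg _) (by positivity)
    nlinarith [Nat.cast_nonneg (α := ℝ) n]
  rw [Real.norm_of_nonneg (hWnn _), Real.norm_of_nonneg (hWnn _)]
  have hsq : (‖α‖ + 2 * ((n : ℝ) + 1) + 2) ^ 2 ≤ 4 * (‖α‖ + 2 * n + 2) ^ 2 := by
    nlinarith [norm_nonneg α, Nat.cast_nonneg (α := ℝ) n]
  have key : W (n + 1) ≤ (‖aJ α n‖ / ((n : ℝ) + 1) ^ 2) * (4 * (‖α‖ + 2 * n + 2) ^ 2)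
      * (R * R ^ n) := by
    simp only [hW]
    push_cast
    have h1 : 0 ≤ R ^ n := pow_nonneg hR n
    have h2 : (0:ℝ) ≤ (‖α‖ + 2 * ((n:ℝ) + 1) + 2) ^ 2 := sq_nonneg _
    calc ‖aJ α (n+1)‖ * (‖α‖ + 2 * ((n:ℝ)+1) + 2) ^ 2 * R ^ (n+1)
        ≤ (‖aJ α n‖ / ((n : ℝ) + 1) ^ 2) * (‖α‖ + 2 * ((n:ℝ)+1) + 2) ^ 2 * R ^ (n+1) := by
          apply mul_le_mul_of_nonneg_right (mul_le_mul_of_nonneg_right hrec h2) (by positivity)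
      _ ≤ (‖aJ α n‖ / ((n : ℝ) + 1) ^ 2) * (4 * (‖α‖ + 2 * n + 2) ^ 2) * R ^ (n+1) := by
          apply mul_le_mul_of_nonneg_right (mul_le_mul_of_nonneg_left hsq (by positivity))
            (by positivity)
      _ = (‖aJ α n‖ / ((n : ℝ) + 1) ^ 2) * (4 * (‖α‖ + 2 * n + 2) ^ 2) * (R * R ^ n) := by
          rw [pow_succ]; ring
  calc W (n + 1) ≤ (‖aJ α n‖ / ((n : ℝ) + 1) ^ 2) * (4 * (‖α‖ + 2 * n + 2) ^ 2)
      * (R * R ^ n) := key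
    _ = (4 * R / ((n : ℝ) + 1) ^ 2) * W n := by simp only [hW]; field_simp
    _ ≤ (1 / 2) * W n := by
        apply mul_le_mul_of_nonneg_right _ (hWnn n)
        rw [div_le_iff₀ (by positivity)]
        nlinarith

lemma summable_a (hre : α.re = 0) (him : α.im ≠ 0) {R : ℝ} (hR : 0 ≤ R) :
    Summable (fun n : ℕ => ‖aJ α n‖ * R ^ n) := by
  refine (summable_master hre him hR).of_nonneg_of_le (fun n => by positivity) (fun n => ?_)
  have h1 : (1:ℝ) ≤ (‖α‖ + 2 * n + 2) ^ 2 := by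
    nlinarith [norm_nonneg α, Nat.cast_nonneg (α := ℝ) n]
  have h2 : (0:ℝ) ≤ ‖aJ α n‖ * R ^ n := by positivity
  nlinarith

lemma summable_ab (hre : α.re = 0) (him : α.im ≠ 0) {R : ℝ} (hR : 0 ≤ R) :
    Summable (fun n : ℕ => ‖aJ α n‖ * ‖bJ α n‖ * R ^ n) := by
  refine (summable_master hre him hR).of_nonneg_of_le (fun n => by positivity) (fun n => ?_)
  have hb : ‖bJ α n‖ ≤ ‖α‖ + 2 * n + 2 := by
    refine le_trans (norm_add_le _ _) ?_
    simp only [norm_mul, Complex.norm_natCast, Complex.norm_ofNat]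
    nlinarith [Nat.cast_nonneg (α := ℝ) n]
  have h1 : (1:ℝ) ≤ ‖α‖ + 2 * n + 2 := by nlinarith [norm_nonneg α, Nat.cast_nonneg (α := ℝ) n]
  have h2 : ‖bJ α n‖ ≤ (‖α‖ + 2 * n + 2) ^ 2 := by nlinarith [norm_nonneg (bJ α n)]
  have h3 : (0:ℝ) ≤ ‖aJ α n‖ * R ^ n := by positivity
  have h4 : (0:ℝ) ≤ R ^ n := by positivity
  calc ‖aJ α n‖ * ‖bJ α n‖ * R ^ n ≤ ‖aJ α n‖ * (‖α‖ + 2 * n + 2) ^ 2 * R ^ n := by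
        apply mul_le_mul_of_nonneg_right (mul_le_mul_of_nonneg_left h2 (norm_nonneg _)) h4
    _ = _ := rfl

lemma summable_abb (hre : α.re = 0) (him : α.im ≠ 0) {R : ℝ} (hR : 0 ≤ R) :
    Summable (fun n : ℕ => ‖aJ α n‖ * (‖bJ α n‖ * ‖bJ α n - 1‖) * R ^ n) := by
  refine (summable_master hre him hR).of_nonneg_of_le (fun n => by positivity) (fun n => ?_)
  have hb : ‖bJ α n‖ ≤ ‖α‖ + 2 * n + 2 := by
    refine le_trans (norm_add_le _ _) ?_
    simp only [norm_mul, Complex.norm_natCast, Complex.norm_ofNat]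
    nlinarith [Nat.cast_nonneg (α := ℝ) n]
  have hb1 : ‖bJ α n - 1‖ ≤ ‖α‖ + 2 * n + 2 := by
    have heq : bJ α n - 1 = α + (2 * (n : ℂ) - 1) := by rw [bJ]; ring
    rw [heq]
    refine le_trans (norm_add_le _ _) ?_
    have h2 : ‖(2 * (n : ℂ) - 1)‖ ≤ 2 * n + 2 := by
      refine le_trans (norm_sub_le _ _) ?_
      simp only [norm_mul, Complex.norm_natCast, Complex.norm_ofNat, norm_one]
      linarith [Nat.cast_nonneg (α := ℝ) n]
    linarith
  have h2 : ‖bJ α n‖ * ‖bJ α n - 1‖ ≤ (‖α‖ + 2 * n + 2) ^ 2 := by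
    have := mul_le_mul hb hb1 (norm_nonneg _) (by positivity)
    nlinarith
  have h4 : (0:ℝ) ≤ R ^ n := by positivity
  calc ‖aJ α n‖ * (‖bJ α n‖ * ‖bJ α n - 1‖) * R ^ n
      ≤ ‖aJ α n‖ * (‖α‖ + 2 * n + 2) ^ 2 * R ^ n := by
        apply mul_le_mul_of_nonneg_right (mul_le_mul_of_nonneg_left h2 (norm_nonneg _)) h4
    _ = _ := rfl

lemma norm_EJ (hre : α.re = 0) {x : ℝ} (hx : 0 < x) (n : ℕ) :
    ‖EJ α n x‖ = ((x / 2) ^ 2) ^ n := by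
  have hx2 : (0:ℝ) < x / 2 := by linarith
  have hre2 : (bJ α n * (Real.log (x/2) : ℂ)).re = ((2 * n : ℕ) : ℝ) * Real.log (x/2) := by
    simp [bJ, Complex.mul_re, Complex.add_re, Complex.add_im, hre]
    try push_cast
    try ring
  rw [EJ, Complex.norm_exp, hre2, Real.exp_nat_mul, Real.exp_log hx2,
    pow_mul]

def besselJD (α : ℂ) (x : ℝ) : ℂ := ∑' n : ℕ, aJ α n * bJ α n * EJ α n x / (x : ℂ)

def besselJDD (α : ℂ) (x : ℝ) : ℂ :=
  ∑' n : ℕ, aJ α n * bJ α n * (bJ α n - 1) * EJ α n x / (x : ℂ) ^ 2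

lemma termJ_hasDerivAt (n : ℕ) {x : ℝ} (hx : 0 < x) :
    HasDerivAt (fun y => aJ α n * EJ α n y) (aJ α n * bJ α n * EJ α n x / (x : ℂ)) x := by
  have hx2 : x / 2 ≠ 0 := by positivity
  have hL : HasDerivAt (fun y : ℝ => Real.log (y / 2)) x⁻¹ x := by
    have h1 : HasDerivAt (fun y : ℝ => y / 2) (1/2 : ℝ) x := by
      simpa using (hasDerivAt_id x).div_const 2
    have h2 := (Real.hasDerivAt_log hx2).comp x h1
    refine h2.congr_deriv ?_
    field_simp
  have hLC : HasDerivAt (fun y : ℝ => ((Real.log (y / 2) : ℝ) : ℂ)) ((x⁻¹ : ℝ) : ℂ) x :=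
    hL.ofReal_comp
  have hmul : HasDerivAt (fun y : ℝ => bJ α n * ((Real.log (y / 2) : ℝ) : ℂ))
      (bJ α n * ((x⁻¹ : ℝ) : ℂ)) x := hLC.const_mul _
  have hexp := hmul.cexp
  have hfin := hexp.const_mul (aJ α n)
  refine hfin.congr_deriv ?_
  rw [EJ]
  push_cast
  field_simp

lemma termJD_hasDerivAt (n : ℕ) {x : ℝ} (hx : 0 < x) :
    HasDerivAt (fun y => aJ α n * bJ α n * EJ α n y / (y : ℂ))
      (aJ α n * bJ α n * (bJ α n - 1) * EJ α n x / (x : ℂ) ^ 2) x := by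
  have hx2 : x / 2 ≠ 0 := by positivity
  have hL : HasDerivAt (fun y : ℝ => Real.log (y / 2)) x⁻¹ x := by
    have h1 : HasDerivAt (fun y : ℝ => y / 2) (1/2 : ℝ) x := by
      simpa using (hasDerivAt_id x).div_const 2
    have h2 := (Real.hasDerivAt_log hx2).comp x h1
    refine h2.congr_deriv ?_
    field_simp
  have hmul : HasDerivAt (fun y : ℝ => bJ α n * ((Real.log (y / 2) : ℝ) : ℂ))
      (bJ α n * ((x⁻¹ : ℝ) : ℂ)) x := hL.ofReal_comp.const_mul _
  have hexp := hmul.cexp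
  have hnum : HasDerivAt (fun y => aJ α n * bJ α n * EJ α n y)
      (aJ α n * bJ α n * bJ α n * EJ α n x / (x : ℂ)) x := by
    have h3 := hexp.const_mul (aJ α n * bJ α n)
    refine h3.congr_deriv ?_
    rw [EJ]
    push_cast
    field_simp
  have hden : HasDerivAt (fun y : ℝ => ((y : ℝ) : ℂ)) 1 x := by
    simpa using (hasDerivAt_id x).ofReal_comp
  have hxne : ((x : ℝ) : ℂ) ≠ 0 := Complex.ofReal_ne_zero.2 hx.ne'
  have h := hnum.div hden hxne
  refine h.congr_deriv ?_
  field_simp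

lemma EJ_bound (hre : α.re = 0) {X : ℝ} (n : ℕ) {y : ℝ} (hy0 : 0 < y) (hyX : y ≤ X) :
    ‖EJ α n y‖ ≤ (max 1 ((X / 2) ^ 2)) ^ n := by
  rw [norm_EJ hre hy0]
  apply pow_le_pow_left₀ (sq_nonneg _)
  refine le_trans ?_ (le_max_right _ _)
  nlinarith

lemma summable_termJ (hre : α.re = 0) (him : α.im ≠ 0) {x : ℝ} (hx : 0 < x) :
    Summable (fun n => aJ α n * EJ α n x) := by
  refine Summable.of_norm ?_
  refine (summable_a hre him (R := max 1 ((x / 2) ^ 2))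
    (le_trans zero_le_one (le_max_left _ _))).of_nonneg_of_le
    (fun n => norm_nonneg _) (fun n => ?_)
  rw [norm_mul]
  exact mul_le_mul_of_nonneg_left (EJ_bound hre n hx le_rfl) (norm_nonneg _)

lemma summable_termJD (hre : α.re = 0) (him : α.im ≠ 0) {x : ℝ} (hx : 0 < x) :
    Summable (fun n => aJ α n * bJ α n * EJ α n x) := by
  refine Summable.of_norm ?_
  refine ((summable_ab hre him (R := max 1 ((x / 2) ^ 2))
    (le_trans zero_le_one (le_max_left _ _)))).of_nonneg_of_le
    (fun n => norm_nonneg _) (fun n => ?_)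
  rw [norm_mul, norm_mul]
  exact mul_le_mul_of_nonneg_left (EJ_bound hre n hx le_rfl)
    (mul_nonneg (norm_nonneg _) (norm_nonneg _))

lemma summable_termJDD (hre : α.re = 0) (him : α.im ≠ 0) {x : ℝ} (hx : 0 < x) :
    Summable (fun n => aJ α n * bJ α n * (bJ α n - 1) * EJ α n x) := by
  refine Summable.of_norm ?_
  refine ((summable_abb hre him (R := max 1 ((x / 2) ^ 2))
    (le_trans zero_le_one (le_max_left _ _)))).of_nonneg_of_le
    (fun n => norm_nonneg _) (fun n => ?_)
  rw [norm_mul, norm_mul, norm_mul]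
  calc ‖aJ α n‖ * ‖bJ α n‖ * ‖bJ α n - 1‖ * ‖EJ α n x‖
      ≤ ‖aJ α n‖ * ‖bJ α n‖ * ‖bJ α n - 1‖ * (max 1 ((x / 2) ^ 2)) ^ n := by
        exact mul_le_mul_of_nonneg_left (EJ_bound hre n hx le_rfl) (by positivity)
    _ = ‖aJ α n‖ * (‖bJ α n‖ * ‖bJ α n - 1‖) * (max 1 ((x / 2) ^ 2)) ^ n := by ring

lemma besselJx_hasDerivAt (hre : α.re = 0) (him : α.im ≠ 0) {x : ℝ} (hx : 0 < x) :
    HasDerivAt (besselJx α) (besselJD α x) x := by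
  set Q : ℝ := max 1 (((x + 1) / 2) ^ 2) with hQdef
  have hQ0 : (0:ℝ) ≤ Q := le_trans zero_le_one (le_max_left _ _)
  have hu : Summable (fun n => ‖aJ α n‖ * ‖bJ α n‖ * Q ^ n * (2 / x)) :=
    (summable_ab hre him hQ0).mul_right _
  have hmem : x ∈ Set.Ioo (x / 2) (x + 1) := ⟨by linarith, by linarith⟩
  have key := hasDerivAt_tsum_of_isPreconnected hu isOpen_Ioo
    (convex_Ioo (x / 2) (x + 1)).isPreconnected
    (g := fun n y => aJ α n * EJ α n y)
    (g' := fun n y => aJ α n * bJ α n * EJ α n y / (y : ℂ))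
    (fun n y hy => termJ_hasDerivAt n (by cases hy with | intro h1 h2 => linarith))
    (fun n y hy => ?_) hmem (summable_termJ hre him hx) hmem
  · exact key
  · have hy0 : 0 < y := by cases hy with | intro h1 h2 => linarith
    rw [norm_div, norm_mul, norm_mul]
    have hE : ‖EJ α n y‖ ≤ Q ^ n := EJ_bound hre n hy0 (le_of_lt hy.2)
    have hyn : ‖((y:ℝ):ℂ)‖ = y := by
      rw [Complex.norm_real, Real.norm_of_nonneg hy0.le]
    rw [hyn, div_le_iff₀ hy0]
    have h1 : ‖aJ α n‖ * ‖bJ α n‖ * ‖EJ α n y‖ ≤ ‖aJ α n‖ * ‖bJ α n‖ * Q ^ n :=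
      mul_le_mul_of_nonneg_left hE (by positivity)
    have h2 : ‖aJ α n‖ * ‖bJ α n‖ * Q ^ n * (2 / x) * y
        ≥ ‖aJ α n‖ * ‖bJ α n‖ * Q ^ n := by
      have h3 : (1:ℝ) ≤ 2 / x * y := by
        rw [div_mul_eq_mul_div, le_div_iff₀ hx]
        linarith [hy.1]
      nlinarith [mul_nonneg (mul_nonneg (norm_nonneg (aJ α n)) (norm_nonneg (bJ α n)))
        (pow_nonneg hQ0 n)]
    linarith

lemma besselJD_hasDerivAt (hre : α.re = 0) (him : α.im ≠ 0) {x : ℝ} (hx : 0 < x) :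
    HasDerivAt (besselJD α) (besselJDD α x) x := by
  set Q : ℝ := max 1 (((x + 1) / 2) ^ 2) with hQdef
  have hQ0 : (0:ℝ) ≤ Q := le_trans zero_le_one (le_max_left _ _)
  have hu : Summable (fun n => ‖aJ α n‖ * (‖bJ α n‖ * ‖bJ α n - 1‖) * Q ^ n * (2 / x) ^ 2) :=
    (summable_abb hre him hQ0).mul_right _
  have hmem : x ∈ Set.Ioo (x / 2) (x + 1) := ⟨by linarith, by linarith⟩
  have key := hasDerivAt_tsum_of_isPreconnected hu isOpen_Ioo
    (convex_Ioo (x / 2) (x + 1)).isPreconnected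
    (g := fun n y => aJ α n * bJ α n * EJ α n y / (y : ℂ))
    (g' := fun n y => aJ α n * bJ α n * (bJ α n - 1) * EJ α n y / (y : ℂ) ^ 2)
    (fun n y hy => termJD_hasDerivAt n (by cases hy with | intro h1 h2 => linarith))
    (fun n y hy => ?_) hmem ?_ hmem
  · exact key
  · have hy0 : 0 < y := by cases hy with | intro h1 h2 => linarith
    rw [norm_div, norm_mul, norm_mul, norm_mul]
    have hE : ‖EJ α n y‖ ≤ Q ^ n := EJ_bound hre n hy0 (le_of_lt hy.2)
    have hyn : ‖((y:ℝ):ℂ) ^ 2‖ = y ^ 2 := by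
      rw [norm_pow, Complex.norm_real, Real.norm_of_nonneg hy0.le]
    rw [hyn, div_le_iff₀ (by positivity)]
    have h3 : (1:ℝ) ≤ (2 / x) ^ 2 * y ^ 2 := by
      have h4 : (1:ℝ) ≤ 2 / x * y := by
        rw [div_mul_eq_mul_div, le_div_iff₀ hx]
        linarith [hy.1]
      nlinarith
    have hP : (0:ℝ) ≤ ‖aJ α n‖ * ‖bJ α n‖ * ‖bJ α n - 1‖ * Q ^ n := by positivity
    have h1 : ‖aJ α n‖ * ‖bJ α n‖ * ‖bJ α n - 1‖ * ‖EJ α n y‖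
        ≤ ‖aJ α n‖ * ‖bJ α n‖ * ‖bJ α n - 1‖ * Q ^ n :=
      mul_le_mul_of_nonneg_left hE (by positivity)
    nlinarith
  · have := (summable_termJD hre him hx).div_const ((x:ℝ):ℂ)
    exact this

/-- The Bessel ODE. -/
lemma bessel_ode (hre : α.re = 0) (him : α.im ≠ 0) {x : ℝ} (hx : 0 < x) :
    (x : ℂ) ^ 2 * besselJDD α x + (x : ℂ) * besselJD α x
      + ((x : ℂ) ^ 2 - α ^ 2) * besselJx α x = 0 := by
  have hX : ((x:ℝ):ℂ) ≠ 0 := Complex.ofReal_ne_zero.2 hx.ne'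
  have hS0 := summable_termJ hre him hx
  have hS1 := summable_termJD hre him hx
  have hS2 := summable_termJDD hre him hx
  have hEsucc : ∀ n, EJ α (n + 1) x = EJ α n x * ((x:ℂ) ^ 2 / 4) := by
    intro n
    have hb : bJ α (n + 1) = bJ α n + 2 := by rw [bJ, bJ]; push_cast; ring
    have hx2 : (0:ℝ) < x / 2 := by linarith
    have hcexp : Complex.exp ((Real.log (x/2) : ℂ)) = ((x/2 : ℝ) : ℂ) := by
      rw [← Complex.ofReal_exp, Real.exp_log hx2]
    rw [EJ, EJ, hb, add_mul, Complex.exp_add]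
    congr 1
    rw [show (2 : ℂ) * (Real.log (x/2) : ℂ) = (Real.log (x/2) : ℂ) + (Real.log (x/2) : ℂ)
      by ring, Complex.exp_add, hcexp]
    push_cast
    field_simp
    ring
  set g : ℕ → ℂ := fun n => aJ α n * ((bJ α n) ^ 2 - α ^ 2) * EJ α n x with hgdef
  set h : ℕ → ℂ := fun n => 4 * aJ α n * EJ α (n + 1) x with hhdef
  have hgsum : Summable g := by
    refine (((hS2.add hS1).sub (hS0.mul_left (α ^ 2)))).congr (fun n => ?_)
    simp only [hgdef]
    ring
  have hhsum : Summable h := by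
    refine ((hS0.mul_right ((x:ℂ) ^ 2))).congr (fun n => ?_)
    simp only [hhdef, hEsucc n]
    field_simp
  have h2 : (x:ℂ) ^ 2 * besselJDD α x = ∑' n, aJ α n * bJ α n * (bJ α n - 1) * EJ α n x := by
    rw [besselJDD, ← tsum_mul_left]
    exact tsum_congr fun n => by field_simp
  have h1 : (x:ℂ) * besselJD α x = ∑' n, aJ α n * bJ α n * EJ α n x := by
    rw [besselJD, ← tsum_mul_left]
    exact tsum_congr fun n => by field_simp
  have h0 : ((x:ℂ) ^ 2 - α ^ 2) * besselJx α x
      = ∑' n, ((x:ℂ) ^ 2 - α ^ 2) * (aJ α n * EJ α n x) := by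
    rw [besselJx_eq, ← tsum_mul_left]
  rw [h2, h1, h0, ← Summable.tsum_add hS2 hS1, ← Summable.tsum_add (hS2.add hS1) (hS0.mul_left _)]
  have hpt : ∀ n, aJ α n * bJ α n * (bJ α n - 1) * EJ α n x + aJ α n * bJ α n * EJ α n x
      + ((x:ℂ) ^ 2 - α ^ 2) * (aJ α n * EJ α n x) = g n + h n := by
    intro n
    simp only [hgdef, hhdef, hEsucc n]
    field_simp
    ring
  rw [tsum_congr hpt, Summable.tsum_add hgsum hhsum]
  have hg0 : g 0 = 0 := by
    simp only [hgdef, bJ]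
    norm_num
  have hkey : ∀ n, g (n + 1) = -h n := by
    intro n
    have h0' : α + (n : ℂ) + 1 ≠ 0 := by
      intro hcon
      have := congrArg Complex.im hcon
      simp at this
      exact him this
    have hn1 : ((n : ℂ) + 1) ≠ 0 := by
      have h5 : ((n + 1 : ℕ) : ℂ) ≠ 0 := Nat.cast_ne_zero.2 (Nat.succ_ne_zero n)
      push_cast at h5
      exact h5
    have hcoef : aJ α (n + 1) * ((bJ α (n + 1)) ^ 2 - α ^ 2) = -4 * aJ α n := by
      rw [aJ_succ him n, bJ]
      push_cast
      field_simp
      ring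
    simp only [hgdef, hhdef]
    calc aJ α (n+1) * ((bJ α (n+1)) ^ 2 - α ^ 2) * EJ α (n+1) x
        = (-4 * aJ α n) * EJ α (n+1) x := by rw [hcoef]
      _ = -(4 * aJ α n * EJ α (n+1) x) := by ring
  rw [Summable.tsum_eq_zero_add hgsum, hg0, zero_add, tsum_congr hkey, tsum_neg]
  ring

/-- small-x bounds -/
lemma besselJx_bound_small (hre : α.re = 0) (him : α.im ≠ 0) {x : ℝ} (hx : 0 < x) (hx1 : x ≤ 2) :
    ‖besselJx α x‖ ≤ ∑' n : ℕ, ‖aJ α n‖ := by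
  have hsa : Summable (fun n : ℕ => ‖aJ α n‖) := by
    have := summable_a hre him (R := 1) zero_le_one
    simpa using this
  have hnorm : ∀ n, ‖aJ α n * EJ α n x‖ ≤ ‖aJ α n‖ := by
    intro n
    rw [norm_mul]
    have hE : ‖EJ α n x‖ ≤ 1 := by
      rw [norm_EJ hre hx]
      apply pow_le_one₀ (sq_nonneg _)
      nlinarith
    nlinarith [norm_nonneg (aJ α n), norm_nonneg (EJ α n x)]
  rw [besselJx_eq]
  refine le_trans (norm_tsum_le_tsum_norm (hsa.of_nonneg_of_le
    (fun n => norm_nonneg _) hnorm)) ?_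
  exact Summable.tsum_le_tsum hnorm (hsa.of_nonneg_of_le (fun n => norm_nonneg _) hnorm) hsa

lemma besselJD_bound_small (hre : α.re = 0) (him : α.im ≠ 0) {x : ℝ} (hx : 0 < x) (hx1 : x ≤ 2) :
    ‖besselJD α x‖ ≤ (∑' n : ℕ, ‖aJ α n‖ * ‖bJ α n‖) / x := by
  have hsab : Summable (fun n : ℕ => ‖aJ α n‖ * ‖bJ α n‖) := by
    have := summable_ab hre him (R := 1) zero_le_one
    simpa using this
  have hsab' : Summable (fun n : ℕ => ‖aJ α n‖ * ‖bJ α n‖ * (1 / x)) := hsab.mul_right _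
  have hnorm : ∀ n, ‖aJ α n * bJ α n * EJ α n x / (x:ℂ)‖
      ≤ ‖aJ α n‖ * ‖bJ α n‖ * (1 / x) := by
    intro n
    rw [norm_div, norm_mul, norm_mul]
    have hE : ‖EJ α n x‖ ≤ 1 := by
      rw [norm_EJ hre hx]
      apply pow_le_one₀ (sq_nonneg _)
      nlinarith
    have hxn : ‖((x:ℝ):ℂ)‖ = x := by rw [Complex.norm_real, Real.norm_of_nonneg hx.le]
    rw [hxn, div_le_iff₀ hx]
    calc ‖aJ α n‖ * ‖bJ α n‖ * ‖EJ α n x‖ ≤ ‖aJ α n‖ * ‖bJ α n‖ * 1 :=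
          mul_le_mul_of_nonneg_left hE (by positivity)
      _ = ‖aJ α n‖ * ‖bJ α n‖ * (1 / x) * x := by field_simp
  rw [besselJD]
  refine le_trans (norm_tsum_le_tsum_norm ((hsab'.of_nonneg_of_le
    (fun n => norm_nonneg _) hnorm))) ?_
  refine le_trans (Summable.tsum_le_tsum hnorm (hsab'.of_nonneg_of_le
    (fun n => norm_nonneg _) hnorm) hsab') ?_
  rw [tsum_mul_right]
  rw [mul_one_div]

/-! Energy method -/

def wF (α : ℂ) (x : ℝ) : ℂ := (Real.sqrt x : ℂ) * besselJx α x

def wD (α : ℂ) (x : ℝ) : ℂ :=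
  ((1 / (2 * Real.sqrt x) : ℝ) : ℂ) * besselJx α x + (Real.sqrt x : ℂ) * besselJD α x

lemma wF_hasDerivAt (hre : α.re = 0) (him : α.im ≠ 0) {x : ℝ} (hx : 0 < x) :
    HasDerivAt (wF α) (wD α x) x := by
  have hs := (Real.hasDerivAt_sqrt hx.ne').ofReal_comp
  have hJ := besselJx_hasDerivAt hre him hx
  have h := hs.mul hJ
  exact h

lemma wD_hasDerivAt (hre : α.re = 0) (him : α.im ≠ 0) (hμ : 0 < μ)
    (hα2 : α ^ 2 = -(μ : ℂ) ^ 2) {x : ℝ} (hx : 0 < x) :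
    HasDerivAt (wD α) (((-(1 + (1 / 4 + μ ^ 2) / x ^ 2) : ℝ) : ℂ) * wF α x) x := by
  have hsx : 0 < Real.sqrt x := Real.sqrt_pos.2 hx
  have hsxne : Real.sqrt x ≠ 0 := hsx.ne'
  have hJ := besselJx_hasDerivAt hre him hx
  have hJD := besselJD_hasDerivAt hre him hx
  have hsqrt := Real.hasDerivAt_sqrt hx.ne'
  have hinv : HasDerivAt (fun y : ℝ => 1 / (2 * Real.sqrt y))
      (-(2 * (1 / (2 * Real.sqrt x))) / (2 * Real.sqrt x) ^ 2) x := by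
    have h2s : HasDerivAt (fun y : ℝ => 2 * Real.sqrt y) (2 * (1 / (2 * Real.sqrt x))) x :=
      hsqrt.const_mul 2
    have h3 := h2s.inv (by positivity)
    simpa [one_div, Pi.inv_def] using h3
  have hA := hinv.ofReal_comp.mul hJ
  have hB := hsqrt.ofReal_comp.mul hJD
  have hAB := hA.add hB
  have hfun : (fun y : ℝ => ((1 / (2 * Real.sqrt y) : ℝ) : ℂ) * besselJx α y
      + ((Real.sqrt y : ℝ) : ℂ) * besselJD α y) = wD α := by
    funext y
    rw [wD]
  replace hAB : HasDerivAt (wD α) _ x := hAB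
  convert hAB using 1
  have hODE := bessel_ode hre him hx
  rw [hα2] at hODE
  have hXne : ((x:ℝ):ℂ) ≠ 0 := Complex.ofReal_ne_zero.2 hx.ne'
  have hSne : ((Real.sqrt x : ℝ):ℂ) ≠ 0 := Complex.ofReal_ne_zero.2 hsxne
  have hxS : ((x:ℝ):ℂ) = ((Real.sqrt x : ℝ):ℂ) ^ 2 := by
    rw [← Complex.ofReal_pow, Real.sq_sqrt hx.le]
  have hJDD : besselJDD α x = (-((x:ℂ) * besselJD α x)
      - ((x:ℂ) ^ 2 + (μ:ℂ) ^ 2) * besselJx α x) / (x:ℂ) ^ 2 := by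
    field_simp
    linear_combination hODE
  rw [wF, hJDD]
  push_cast
  rw [hxS]
  field_simp
  ring_nf

def Efun (α : ℂ) (x : ℝ) : ℝ := Complex.normSq (wD α x) + Complex.normSq (wF α x)

lemma hasDerivAt_normSq {f : ℝ → ℂ} {f' : ℂ} {x : ℝ} (hf : HasDerivAt f f' x) :
    HasDerivAt (fun y => Complex.normSq (f y)) (2 * (f' * (starRingEnd ℂ) (f x)).re) x := by
  have hr : HasDerivAt (fun y => (f y).re) f'.re x :=
    Complex.reCLM.hasFDerivAt.comp_hasDerivAt x hf
  have hi : HasDerivAt (fun y => (f y).im) f'.im x :=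
    Complex.imCLM.hasFDerivAt.comp_hasDerivAt x hf
  simp only [Complex.normSq_apply]
  refine ((hr.mul hr).add (hi.mul hi)).congr_deriv ?_
  simp only [Complex.mul_re, Complex.conj_re, Complex.conj_im]
  ring

lemma Efun_le (hre : α.re = 0) (him : α.im ≠ 0) (hμ : 0 < μ)
    (hα2 : α ^ 2 = -(μ : ℂ) ^ 2) {x : ℝ} (hx : 1 ≤ x) :
    Efun α x ≤ Efun α 1 * Real.exp (1 / 4 + μ ^ 2) := by
  set c : ℝ := 1 / 4 + μ ^ 2 with hcdef
  have hc0 : 0 < c := by positivity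
  set G : ℝ → ℝ := fun y => Efun α y * Real.exp (c / y) with hGdef
  have hEderiv : ∀ y : ℝ, 0 < y → HasDerivAt (Efun α)
      (2 * ((((-(1 + c / y ^ 2) : ℝ) : ℂ) * wF α y) * (starRingEnd ℂ) (wD α y)).re
        + 2 * (wD α y * (starRingEnd ℂ) (wF α y)).re) y := by
    intro y hy
    exact (hasDerivAt_normSq (wD_hasDerivAt hre him hμ hα2 hy)).add
      (hasDerivAt_normSq (wF_hasDerivAt hre him hy))
  have hcy : ∀ y : ℝ, 0 < y →
      HasDerivAt (fun z : ℝ => Real.exp (c / z)) (Real.exp (c / y) * (-(c / y ^ 2))) y := by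
    intro y hy
    have h1 : HasDerivAt (fun z : ℝ => c / z) (c * (-(y ^ 2)⁻¹)) y :=
      (hasDerivAt_inv hy.ne').const_mul c
    have h2 := h1.exp
    convert h2 using 1
    field_simp
  have hGderiv : ∀ y : ℝ, 0 < y → HasDerivAt G
      ((2 * ((((-(1 + c / y ^ 2) : ℝ) : ℂ) * wF α y) * (starRingEnd ℂ) (wD α y)).re
        + 2 * (wD α y * (starRingEnd ℂ) (wF α y)).re) * Real.exp (c / y)
        + Efun α y * (Real.exp (c / y) * (-(c / y ^ 2)))) y := by
    intro y hy
    exact (hEderiv y hy).mul (hcy y hy)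
  have hEnonneg : ∀ y : ℝ, 0 ≤ Efun α y := by
    intro y
    exact add_nonneg (Complex.normSq_nonneg _) (Complex.normSq_nonneg _)
  have hGle : ∀ y ∈ interior (Set.Ici (1:ℝ)), deriv G y ≤ 0 := by
    intro y hy
    rw [interior_Ici, Set.mem_Ioi] at hy
    have hy0 : (0:ℝ) < y := by linarith
    rw [(hGderiv y hy0).deriv]
    set q : ℝ := c / y ^ 2 with hq
    have hq0 : 0 ≤ q := by positivity
    have hr : ((((-(1 + q) : ℝ) : ℂ) * wF α y) * (starRingEnd ℂ) (wD α y)).re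
        = -(1 + q) * ((wF α y) * (starRingEnd ℂ) (wD α y)).re := by
      rw [mul_assoc]
      simp [Complex.mul_re, Complex.ofReal_re, Complex.ofReal_im]
    have hrr : ((wD α y) * (starRingEnd ℂ) (wF α y)).re
        = ((wF α y) * (starRingEnd ℂ) (wD α y)).re := by
      simp [Complex.mul_re, Complex.conj_re, Complex.conj_im]
      ring
    set r : ℝ := ((wF α y) * (starRingEnd ℂ) (wD α y)).re with hrdef
    have habs : |r| ≤ ‖wF α y‖ * ‖wD α y‖ := by
      calc |r| ≤ ‖(wF α y) * (starRingEnd ℂ) (wD α y)‖ := Complex.abs_re_le_norm _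
        _ = ‖wF α y‖ * ‖wD α y‖ := by
            rw [norm_mul, Complex.norm_conj]
    have hamgm : 2 * (‖wF α y‖ * ‖wD α y‖) ≤ Efun α y := by
      rw [Efun, ← Complex.sq_norm, ← Complex.sq_norm]
      nlinarith [sq_nonneg (‖wF α y‖ - ‖wD α y‖)]
    have hEd : 2 * (-(1 + q) * r) + 2 * r = -(2 * q * r) := by ring
    rw [hr, hrr, hEd]
    have hexp0 : 0 < Real.exp (c / y) := Real.exp_pos _
    have hkey : -(2 * q * r) ≤ q * Efun α y := by
      have h1 : -(2 * q * r) ≤ 2 * q * |r| := by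
        have := neg_abs_le r
        nlinarith
      have h2 : 2 * q * |r| ≤ q * Efun α y := by
        have := mul_le_mul_of_nonneg_left hamgm hq0
        have h3 := mul_le_mul_of_nonneg_left habs (by positivity : (0:ℝ) ≤ 2 * q)
        nlinarith
      linarith
    have := mul_le_mul_of_nonneg_right hkey hexp0.le
    nlinarith [hEnonneg y, hq0, hexp0]
  have hGcont : ContinuousOn G (Set.Ici (1:ℝ)) := by
    intro y hy
    have hy0 : (0:ℝ) < y := lt_of_lt_of_le zero_lt_one hy
    exact ((hGderiv y hy0).continuousAt).continuousWithinAt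
  have hGdiff : DifferentiableOn ℝ G (interior (Set.Ici (1:ℝ))) := by
    intro y hy
    rw [interior_Ici, Set.mem_Ioi] at hy
    have hy0 : (0:ℝ) < y := by linarith
    exact ((hGderiv y hy0).differentiableAt).differentiableWithinAt
  have hanti : AntitoneOn G (Set.Ici (1:ℝ)) :=
    antitoneOn_of_deriv_nonpos (convex_Ici 1) hGcont hGdiff hGle
  have h1 : Efun α x ≤ G x := by
    simp only [hGdef]
    have : (1:ℝ) ≤ Real.exp (c / x) := by
      rw [Real.one_le_exp_iff]
      positivity
    nlinarith [hEnonneg x]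
  have h2 : G x ≤ G 1 := hanti (Set.mem_Ici.2 le_rfl) (Set.mem_Ici.2 hx) hx
  have h3 : G 1 = Efun α 1 * Real.exp c := by
    simp [hGdef]
  linarith

/-- All the J bounds packaged. -/
lemma besselJ_bounds (hre : α.re = 0) (him : α.im ≠ 0) (hμ : 0 < μ)
    (hα2 : α ^ 2 = -(μ : ℂ) ^ 2) :
    ∃ C : ℝ, 0 < C ∧
      (∀ x : ℝ, 0 < x → x ≤ 1 → ‖besselJx α x‖ ≤ C ∧ ‖besselJD α x‖ ≤ C / x) ∧
      (∀ x : ℝ, 1 ≤ x → ‖besselJx α x‖ ≤ C / Real.sqrt x ∧ ‖besselJD α x‖ ≤ C / Real.sqrt x) := by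
  set B0 : ℝ := ∑' n : ℕ, ‖aJ α n‖ with hB0
  set B1 : ℝ := ∑' n : ℕ, ‖aJ α n‖ * ‖bJ α n‖ with hB1
  set A : ℝ := Real.sqrt (Efun α 1 * Real.exp (1 / 4 + μ ^ 2)) with hA
  have hB0nn : 0 ≤ B0 := tsum_nonneg fun n => norm_nonneg _
  have hB1nn : 0 ≤ B1 := tsum_nonneg fun n => by positivity
  have hAnn : 0 ≤ A := Real.sqrt_nonneg _
  have hCle0 : B0 ≤ B0 + B1 + 2 * A + 2 := by linarith
  have hCle1 : B1 ≤ B0 + B1 + 2 * A + 2 := by linarith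
  have hCle2 : A + A / 2 ≤ B0 + B1 + 2 * A + 2 := by linarith
  have hCle3 : A ≤ B0 + B1 + 2 * A + 2 := by linarith
  refine ⟨B0 + B1 + 2 * A + 2, by linarith, fun x hx hx1 => ?_, fun x hx => ?_⟩
  · constructor
    · exact le_trans (besselJx_bound_small hre him hx (by linarith)) hCle0
    · refine le_trans (besselJD_bound_small hre him hx (by linarith)) ?_
      gcongr
  · have hx0 : (0:ℝ) < x := lt_of_lt_of_le zero_lt_one hx
    have hsx : 0 < Real.sqrt x := Real.sqrt_pos.2 hx0
    have hsx1 : 1 ≤ Real.sqrt x := Real.one_le_sqrt.2 hx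
    have hEle := Efun_le hre him hμ hα2 hx
    have hwF : ‖wF α x‖ ≤ A := by
      rw [show ‖wF α x‖ = Real.sqrt (Complex.normSq (wF α x)) by
        rw [Complex.norm_def]]
      apply Real.sqrt_le_sqrt
      have : Complex.normSq (wF α x) ≤ Efun α x := by
        rw [Efun]
        linarith [Complex.normSq_nonneg (wD α x)]
      linarith
    have hwD : ‖wD α x‖ ≤ A := by
      rw [show ‖wD α x‖ = Real.sqrt (Complex.normSq (wD α x)) by
        rw [Complex.norm_def]]
      apply Real.sqrt_le_sqrt
      have : Complex.normSq (wD α x) ≤ Efun α x := by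
        rw [Efun]
        linarith [Complex.normSq_nonneg (wF α x)]
      linarith
    have hnormwF : ‖wF α x‖ = Real.sqrt x * ‖besselJx α x‖ := by
      rw [wF, norm_mul, Complex.norm_real, Real.norm_of_nonneg hsx.le]
    have hJb : ‖besselJx α x‖ ≤ A / Real.sqrt x := by
      rw [le_div_iff₀ hsx]
      calc ‖besselJx α x‖ * Real.sqrt x = ‖wF α x‖ := by rw [hnormwF]; ring
        _ ≤ A := hwF
    constructor
    · refine le_trans hJb ?_
      gcongr
    · have hJD : Real.sqrt x * ‖besselJD α x‖ ≤ A + A / 2 := by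
        have heq : (Real.sqrt x : ℂ) * besselJD α x
            = wD α x - ((1 / (2 * Real.sqrt x) : ℝ) : ℂ) * besselJx α x := by
          rw [wD]
          ring
        have h2 : ‖(Real.sqrt x : ℂ) * besselJD α x‖ ≤ ‖wD α x‖
            + ‖((1 / (2 * Real.sqrt x) : ℝ) : ℂ) * besselJx α x‖ := by
          rw [heq]
          exact norm_sub_le _ _
        rw [norm_mul, Complex.norm_real, Real.norm_of_nonneg hsx.le] at h2
        have h4 : ‖besselJx α x‖ ≤ A := by
          refine le_trans hJb ?_
          rw [div_le_iff₀ hsx]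
          nlinarith
        have h3 : ‖((1 / (2 * Real.sqrt x) : ℝ) : ℂ) * besselJx α x‖ ≤ A / 2 := by
          rw [norm_mul, Complex.norm_real, Real.norm_of_nonneg (by positivity)]
          have h5 : 1 / (2 * Real.sqrt x) ≤ 1 / 2 := by
            gcongr <;> linarith
          calc 1 / (2 * Real.sqrt x) * ‖besselJx α x‖ ≤ 1 / 2 * A :=
                mul_le_mul h5 h4 (norm_nonneg _) (by norm_num)
            _ = A / 2 := by ring
        linarith
      rw [show ‖besselJD α x‖ = Real.sqrt x * ‖besselJD α x‖ / Real.sqrt x by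
        field_simp]
      gcongr
      linarith

end BesselAux


end BesselAux


section HankelAux

open BesselAux

lemma besselJ_eq_besselJx : besselJ = BesselAux.besselJx := rfl

lemma hankel_bounds (μ : ℝ) (hμ : 0 < μ) :
    ∃ C : ℝ, 0 < C ∧
      ∃ HD : ℝ → ℂ,
        (∀ x : ℝ, 0 < x → HasDerivAt (hankel1 (Complex.I * (μ : ℂ))) (HD x) x) ∧
        (∀ x : ℝ, 0 < x → x ≤ 1 →
          ‖hankel1 (Complex.I * (μ : ℂ)) x‖ ≤ C ∧ ‖HD x‖ ≤ C / x) ∧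
        (∀ x : ℝ, 1 ≤ x →
          ‖hankel1 (Complex.I * (μ : ℂ)) x‖ ≤ C / Real.sqrt x ∧
            ‖HD x‖ ≤ C / Real.sqrt x) := by
  set ν : ℂ := Complex.I * (μ : ℂ) with hνdef
  have hνre : ν.re = 0 := by simp [hνdef]
  have hνim : ν.im ≠ 0 := by simpa [hνdef] using hμ.ne'
  have hνre' : (-ν).re = 0 := by simp [hνdef]
  have hνim' : (-ν).im ≠ 0 := by simpa [hνdef] using hμ.ne'
  have hν2 : ν ^ 2 = -(μ : ℂ) ^ 2 := by
    rw [hνdef, mul_pow, Complex.I_sq]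
    ring
  have hν2' : (-ν) ^ 2 = -(μ : ℂ) ^ 2 := by rw [neg_pow]; simp [hν2]
  obtain ⟨Cp, hCp0, hCps, hCpl⟩ := besselJ_bounds hνre hνim hμ hν2
  obtain ⟨Cm, hCm0, hCms, hCml⟩ := besselJ_bounds hνre' hνim' hμ hν2'
  set e : ℂ := Complex.exp (-(Complex.I * (Real.pi : ℂ) * ν)) with hedef
  set d : ℂ := Complex.I * Complex.sin (ν * (Real.pi : ℂ)) with hddef
  have hd : d ≠ 0 := by
    rw [hddef]
    apply mul_ne_zero Complex.I_ne_zero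
    rw [Ne, Complex.sin_eq_zero_iff]
    rintro ⟨kk, hkk⟩
    have him := congrArg Complex.im hkk
    simp [hνdef] at him
    exact hμ.ne' him
  have hdn : 0 < ‖d‖ := norm_pos_iff.2 hd
  set K : ℝ := (Cm + ‖e‖ * Cp) / ‖d‖ with hKdef
  have hK0 : 0 ≤ K := by positivity
  have hfun : hankel1 ν = fun y : ℝ =>
      (BesselAux.besselJx (-ν) y - e * BesselAux.besselJx ν y) / d := by
    funext y
    rw [hankel1, besselJ_eq_besselJx]
  refine ⟨K + 1, by positivity,
    fun x => (BesselAux.besselJD (-ν) x - e * BesselAux.besselJD ν x) / d, ?_, ?_, ?_⟩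
  · intro x hx
    rw [hfun]
    exact ((besselJx_hasDerivAt hνre' hνim' hx).sub
      ((besselJx_hasDerivAt hνre hνim hx).const_mul e)).div_const d
  · intro x hx hx1
    have hnum : ‖BesselAux.besselJx (-ν) x - e * BesselAux.besselJx ν x‖
        ≤ Cm + ‖e‖ * Cp := by
      refine le_trans (norm_sub_le _ _) ?_
      have h1 := (hCms x hx hx1).1
      have h2 := (hCps x hx hx1).1
      rw [norm_mul]
      have := mul_le_mul_of_nonneg_left h2 (norm_nonneg e)
      linarith
    have hnumD : ‖BesselAux.besselJD (-ν) x - e * BesselAux.besselJD ν x‖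
        ≤ (Cm + ‖e‖ * Cp) / x := by
      refine le_trans (norm_sub_le _ _) ?_
      have h1 := (hCms x hx hx1).2
      have h2 := (hCps x hx hx1).2
      rw [norm_mul]
      have h3 := mul_le_mul_of_nonneg_left h2 (norm_nonneg e)
      have h4 : ‖e‖ * (Cp / x) = ‖e‖ * Cp / x := (mul_div_assoc _ _ _).symm
      rw [add_div]
      linarith
    constructor
    · rw [hfun]
      simp only [norm_div]
      refine le_trans (div_le_div_of_nonneg_right hnum hdn.le) ?_
      rw [← hKdef]
      linarith
    · simp only [norm_div]
      refine le_trans (div_le_div_of_nonneg_right hnumD hdn.le) ?_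
      rw [div_div, mul_comm x ‖d‖, ← div_div, ← hKdef]
      gcongr
      linarith
  · intro x hx
    have hx0 : (0:ℝ) < x := lt_of_lt_of_le zero_lt_one hx
    have hsx : (0:ℝ) < Real.sqrt x := Real.sqrt_pos.2 hx0
    have hnum : ‖BesselAux.besselJx (-ν) x - e * BesselAux.besselJx ν x‖
        ≤ (Cm + ‖e‖ * Cp) / Real.sqrt x := by
      refine le_trans (norm_sub_le _ _) ?_
      have h1 := (hCml x hx).1
      have h2 := (hCpl x hx).1
      rw [norm_mul]
      have h3 := mul_le_mul_of_nonneg_left h2 (norm_nonneg e)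
      have h4 : ‖e‖ * (Cp / Real.sqrt x) = ‖e‖ * Cp / Real.sqrt x := (mul_div_assoc _ _ _).symm
      rw [add_div]
      linarith
    have hnumD : ‖BesselAux.besselJD (-ν) x - e * BesselAux.besselJD ν x‖
        ≤ (Cm + ‖e‖ * Cp) / Real.sqrt x := by
      refine le_trans (norm_sub_le _ _) ?_
      have h1 := (hCml x hx).2
      have h2 := (hCpl x hx).2
      rw [norm_mul]
      have h3 := mul_le_mul_of_nonneg_left h2 (norm_nonneg e)
      have h4 : ‖e‖ * (Cp / Real.sqrt x) = ‖e‖ * Cp / Real.sqrt x := (mul_div_assoc _ _ _).symm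
      rw [add_div]
      linarith
    constructor
    · rw [hfun]
      simp only [norm_div]
      refine le_trans (div_le_div_of_nonneg_right hnum hdn.le) ?_
      rw [div_div, mul_comm (Real.sqrt x) ‖d‖, ← div_div, ← hKdef]
      gcongr
      linarith
    · simp only [norm_div]
      refine le_trans (div_le_div_of_nonneg_right hnumD hdn.le) ?_
      rw [div_div, mul_comm (Real.sqrt x) ‖d‖, ← div_div, ← hKdef]
      gcongr
      linarith

end HankelAux

set_option maxHeartbeats 1000000 in
/-- `|∂v/∂t(t,k)| ≤ C·t·ω(k)^{1/2}` for `t ≥ 1`, `k > 0`. -/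
theorem mode_function_deriv_bound (m R : ℝ) (hm : 0 < m) (hR : 0 < R) (hmR : 3 / 2 < m * R) :
    ∃ C : ℝ, 0 < C ∧ ∀ t : ℝ, 1 ≤ t → ∀ k : ℝ, 0 < k →
      ‖modeV' m R t k‖ ≤ C * t * omegaK k ^ ((1 : ℝ) / 2) := by
  set μ : ℝ := modeMu m R with hμdef
  have hμ : 0 < μ := by
    rw [hμdef, modeMu]
    apply Real.sqrt_pos.2
    nlinarith
  obtain ⟨C1, hC10, HD, hHderiv, hHsmall, hHlarge⟩ := hankel_bounds μ hμ
  refine ⟨3 * C1, by positivity, fun t ht k hk => ?_⟩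
  have ht0 : (0:ℝ) < t := lt_of_lt_of_le zero_lt_one ht
  have hkt : (0:ℝ) < k * t := by positivity
  set c0 : ℝ := Real.exp (-(μ * Real.pi / 2)) with hc0def
  have hc0pos : 0 < c0 := Real.exp_pos _
  have hc0le : c0 ≤ 1 := by
    rw [hc0def, Real.exp_le_one_iff]
    have := Real.pi_pos
    nlinarith
  -- derivative of modeV in t
  have hrpow : HasDerivAt (fun s : ℝ => s ^ ((3:ℝ)/2)) ((3:ℝ)/2 * t ^ ((3:ℝ)/2 - 1)) t :=
    Real.hasDerivAt_rpow_const (Or.inl ht0.ne')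
  have hinner : HasDerivAt (fun s : ℝ => k * s) k t := by
    simpa using (hasDerivAt_id t).const_mul k
  have hν : modeNu m R = Complex.I * (μ : ℂ) := rfl
  have hcomp : HasDerivAt (fun s : ℝ => hankel1 (Complex.I * (μ : ℂ)) (k * s))
      (k • HD (k * t)) t := by
    have h := (hHderiv (k * t) hkt).scomp t hinner
    exact h
  have hfull := ((hrpow.ofReal_comp).const_mul ((c0 : ℝ) : ℂ)).mul hcomp
  have hmodeVfun : (fun s : ℝ => modeV m R s k)
      = fun s : ℝ => (((c0 : ℝ) : ℂ) * ((s ^ ((3:ℝ)/2) : ℝ) : ℂ))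
        * hankel1 (Complex.I * (μ : ℂ)) (k * s) := by
    funext s
    rw [modeV, hν, ← hμdef, ← hc0def]
  have hval : modeV' m R t k
      = (((c0 : ℝ) : ℂ) * (((3:ℝ)/2 * t ^ ((3:ℝ)/2 - 1) : ℝ) : ℂ))
          * hankel1 (Complex.I * (μ : ℂ)) (k * t)
        + (((c0 : ℝ) : ℂ) * ((t ^ ((3:ℝ)/2) : ℝ) : ℂ)) * (k • HD (k * t)) := by
    rw [modeV']
    rw [hmodeVfun]
    exact hfull.deriv
  -- norms
  have hsqt : (0:ℝ) < Real.sqrt t := Real.sqrt_pos.2 ht0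
  have hsqt1 : (1:ℝ) ≤ Real.sqrt t := Real.one_le_sqrt.2 ht
  have hsqtle : Real.sqrt t ≤ t := by
    nlinarith [Real.sq_sqrt ht0.le]
  have hexp1 : t ^ ((3:ℝ)/2 - 1) = Real.sqrt t := by
    rw [show (3:ℝ)/2 - 1 = 1/2 by norm_num, Real.sqrt_eq_rpow]
  have hexp2 : t ^ ((3:ℝ)/2) = t * Real.sqrt t := by
    rw [show (3:ℝ)/2 = 1 + 1/2 by norm_num, Real.rpow_add ht0, Real.rpow_one,
      Real.sqrt_eq_rpow]
  have homega : omegaK k ^ ((1:ℝ)/2) = Real.sqrt (Real.sqrt (1 + k ^ 2)) := by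
    rw [omegaK, Real.sqrt_eq_rpow, Real.sqrt_eq_rpow]
  set W : ℝ := Real.sqrt (Real.sqrt (1 + k ^ 2)) with hWdef
  have hW1 : (1:ℝ) ≤ W := by
    rw [hWdef]
    apply Real.one_le_sqrt.2
    apply Real.one_le_sqrt.2
    nlinarith
  have hsqk : Real.sqrt k ≤ W := by
    rw [hWdef]
    apply Real.sqrt_le_sqrt
    have h1 := Real.sqrt_le_sqrt (show k ^ 2 ≤ 1 + k ^ 2 by linarith)
    rwa [Real.sqrt_sq hk.le] at h1
  have hnorm : ‖modeV' m R t k‖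
      ≤ (3:ℝ)/2 * Real.sqrt t * ‖hankel1 (Complex.I * (μ : ℂ)) (k * t)‖
        + t * Real.sqrt t * (‖HD (k * t)‖ * k) := by
    rw [hval]
    refine le_trans (norm_add_le _ _) ?_
    rw [norm_mul, norm_mul, norm_mul, norm_mul, norm_smul]
    simp only [Complex.norm_real]
    rw [Real.norm_of_nonneg hc0pos.le,
      Real.norm_of_nonneg (by positivity : (0:ℝ) ≤ (3:ℝ)/2 * t ^ ((3:ℝ)/2 - 1)),
      Real.norm_of_nonneg (by positivity : (0:ℝ) ≤ t ^ ((3:ℝ)/2)),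
      Real.norm_of_nonneg hk.le, hexp1, hexp2]
    have hH0 : (0:ℝ) ≤ ‖hankel1 (Complex.I * (μ : ℂ)) (k * t)‖ := norm_nonneg _
    have hHD0 : (0:ℝ) ≤ ‖HD (k * t)‖ := norm_nonneg _
    nlinarith [mul_nonneg (mul_nonneg (by positivity : (0:ℝ) ≤ (3:ℝ)/2 * Real.sqrt t) hH0)
      (sub_nonneg.2 hc0le), mul_nonneg (mul_nonneg (by positivity : (0:ℝ) ≤ t * Real.sqrt t)
      (mul_nonneg hHD0 hk.le)) (sub_nonneg.2 hc0le)]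
  rcases le_or_gt (k * t) 1 with hcase | hcase
  · -- small argument
    obtain ⟨hH, hHD⟩ := hHsmall (k * t) hkt hcase
    have hbound : ‖modeV' m R t k‖
        ≤ (3:ℝ)/2 * Real.sqrt t * C1 + t * Real.sqrt t * (C1 / (k * t) * k) := by
      refine le_trans hnorm ?_
      gcongr
    have heq : t * Real.sqrt t * (C1 / (k * t) * k) = Real.sqrt t * C1 := by
      field_simp
    have h5 : (3:ℝ)/2 * Real.sqrt t * C1 + Real.sqrt t * C1 ≤ 3 * C1 * t * W := by
      have h6 : (5:ℝ)/2 * (Real.sqrt t * C1) ≤ (5:ℝ)/2 * (t * C1) := by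
        gcongr
      nlinarith [mul_pos ht0 hC10]
    calc ‖modeV' m R t k‖
        ≤ (3:ℝ)/2 * Real.sqrt t * C1 + t * Real.sqrt t * (C1 / (k * t) * k) := hbound
      _ = (3:ℝ)/2 * Real.sqrt t * C1 + Real.sqrt t * C1 := by rw [heq]
      _ ≤ 3 * C1 * t * W := h5
      _ = 3 * C1 * t * omegaK k ^ ((1:ℝ)/2) := by rw [homega]
  · -- large argument
    obtain ⟨hH, hHD⟩ := hHlarge (k * t) hcase.le
    have hskt : Real.sqrt (k * t) = Real.sqrt k * Real.sqrt t := Real.sqrt_mul hk.le t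
    have hsk : (0:ℝ) < Real.sqrt k := Real.sqrt_pos.2 hk
    have hskt1 : (1:ℝ) ≤ Real.sqrt (k * t) := Real.one_le_sqrt.2 hcase.le
    have hbound : ‖modeV' m R t k‖
        ≤ (3:ℝ)/2 * Real.sqrt t * (C1 / Real.sqrt (k * t))
          + t * Real.sqrt t * (C1 / Real.sqrt (k * t) * k) := by
      refine le_trans hnorm ?_
      gcongr
    have heq1 : (3:ℝ)/2 * Real.sqrt t * (C1 / Real.sqrt (k * t))
        = (3:ℝ)/2 * C1 / Real.sqrt k := by
      rw [hskt]
      field_simp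
    have heq2 : t * Real.sqrt t * (C1 / Real.sqrt (k * t) * k)
        = C1 * t * (k / Real.sqrt k) := by
      rw [hskt]
      field_simp
    have hksq : k / Real.sqrt k = Real.sqrt k := by
      rw [eq_comm, eq_div_iff hsk.ne', Real.mul_self_sqrt hk.le]
    have hinv : (3:ℝ)/2 * C1 / Real.sqrt k ≤ (3:ℝ)/2 * C1 * t := by
      rw [div_le_iff₀ hsk]
      have h7 : (1:ℝ) ≤ t * Real.sqrt k := by
        nlinarith [Real.mul_self_sqrt hk.le, Real.sq_sqrt ht0.le,
          mul_pos hsk hsqt]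
      nlinarith
    calc ‖modeV' m R t k‖
        ≤ (3:ℝ)/2 * Real.sqrt t * (C1 / Real.sqrt (k * t))
          + t * Real.sqrt t * (C1 / Real.sqrt (k * t) * k) := hbound
      _ = (3:ℝ)/2 * C1 / Real.sqrt k + C1 * t * (k / Real.sqrt k) := by
          rw [heq1, heq2]
      _ = (3:ℝ)/2 * C1 / Real.sqrt k + C1 * t * Real.sqrt k := by rw [hksq]
      _ ≤ (3:ℝ)/2 * C1 * t + C1 * t * W :=
          add_le_add hinv (mul_le_mul_of_nonneg_left hsqk (by positivity))
      _ ≤ 3 * C1 * t * W := by nlinarith [mul_pos ht0 hC10, mul_pos (mul_pos ht0 hC10) hsk]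
      _ = 3 * C1 * t * omegaK k ^ ((1:ℝ)/2) := by rw [homega]
end
end

section
/- For every nondegenerate interval I ⊆ (0,∞) containing 1, it is not the case that conj(v(t,k))·conj(v'(1,k)) − t·conj(v'(t,k))·conj(v(1,k)) = 0 for all t ∈ I and all k > 0; that is, there exist t ∈ I and k > 0 for which this expression is nonzero. (This is the key fact behind the non-unitary-implementability of the free time evolution: the conjugate-linear part of the transformed evolution Û₀(t,1) is a multiplication operator with exactly this multiplier, and a nonzero multiplication operator is never Hilbert–Schmidt.) -/
open Complex MeasureTheory Filter
open scoped RealInnerProductSpace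

noncomputable section

section MplAuxSection

namespace MplAux

/-- coefficients of the Bessel power series -/
def bc (α : ℂ) (n : ℕ) : ℂ :=
  (-1 : ℂ) ^ n / ((n.factorial : ℂ) * Complex.Gamma (α + (n : ℂ) + 1))

def gS (α : ℂ) : FormalMultilinearSeries ℂ ℂ ℂ :=
  FormalMultilinearSeries.ofScalars ℂ (bc α)

def gg (α : ℂ) : ℂ → ℂ := (gS α).sum

lemma gg_apply (α : ℂ) (y : ℂ) : gg α y = ∑' n, bc α n * y ^ n := by
  show FormalMultilinearSeries.ofScalarsSum (E := ℂ) (bc α) y = _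
  simpa [smul_eq_mul] using FormalMultilinearSeries.ofScalars_sum_eq (E := ℂ) (bc α) y

lemma gg_zero (α : ℂ) : gg α 0 = bc α 0 := by
  have h := FormalMultilinearSeries.ofScalarsSum_zero (E := ℂ) (c := bc α)
  rw [FormalMultilinearSeries.ofScalarsSum] at h
  simpa [smul_eq_mul, gg, gS] using h

variable {α : ℂ}

lemma aux_ne (hα : α.im ≠ 0) (n : ℕ) : α + (n : ℂ) + 1 ≠ 0 := by
  intro h
  have : (α + (n : ℂ) + 1).im = 0 := by rw [h]; simp
  simp at this; exact hα this

lemma gamma_ne (hα : α.im ≠ 0) (n : ℕ) : Complex.Gamma (α + (n : ℂ) + 1) ≠ 0 := by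
  apply Complex.Gamma_ne_zero
  intro m h
  have : (α + (n : ℂ) + 1).im = 0 := by rw [h]; simp
  simp at this; exact hα this

lemma gamma_lb (hre : α.re = 0) (hα : α.im ≠ 0) (n : ℕ) :
    (n.factorial : ℝ) * ‖Complex.Gamma (α + 1)‖ ≤ ‖Complex.Gamma (α + (n : ℂ) + 1)‖ := by
  induction n with
  | zero => simp
  | succ n ih =>
    push_cast
    have h1 : α + ((n : ℂ) + 1) + 1 = (α + (n : ℂ) + 1) + 1 := by ring
    have h2 : Complex.Gamma ((α + (n : ℂ) + 1) + 1) =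
        (α + (n : ℂ) + 1) * Complex.Gamma (α + (n : ℂ) + 1) :=
      Complex.Gamma_add_one _ (aux_ne hα n)
    have hre2 : ((n : ℝ) + 1) ≤ ‖(α + (n : ℂ) + 1)‖ := by
      have := Complex.abs_re_le_norm (α + (n : ℂ) + 1)
      have hr : (α + (n : ℂ) + 1).re = (n : ℝ) + 1 := by simp [hre]
      rw [hr] at this
      calc ((n:ℝ)+1) ≤ |(n:ℝ)+1| := le_abs_self _
        _ ≤ _ := this
    have hnn : (0:ℝ) ≤ (n.factorial : ℝ) * ‖Complex.Gamma (α + 1)‖ := by positivity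
    calc ((n+1).factorial : ℝ) * ‖Complex.Gamma (α + 1)‖
        = ((n:ℝ)+1) * ((n.factorial : ℝ) * ‖Complex.Gamma (α + 1)‖) := by
          push_cast [Nat.factorial_succ]; ring
      _ ≤ ((n:ℝ)+1) * ‖Complex.Gamma (α + (n : ℂ) + 1)‖ := by
          apply mul_le_mul_of_nonneg_left ih (by positivity)
      _ ≤ ‖(α + (n : ℂ) + 1)‖ * ‖Complex.Gamma (α + (n : ℂ) + 1)‖ := by
          apply mul_le_mul_of_nonneg_right hre2 (norm_nonneg _)
      _ = ‖Complex.Gamma (α + ((n : ℂ) + 1) + 1)‖ := by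
          rw [h1, h2, norm_mul]
  
lemma radius_top (hre : α.re = 0) (hα : α.im ≠ 0) : (gS α).radius = ⊤ := by
  apply FormalMultilinearSeries.radius_eq_top_of_summable_norm
  intro r
  have hG : (0:ℝ) < ‖Complex.Gamma (α + 1)‖ := by
    have h := gamma_ne hα 0
    simp only [Nat.cast_zero, add_zero] at h
    simpa using norm_pos_iff.mpr h
  set C : ℝ := ‖Complex.Gamma (α + 1)‖⁻¹ with hC
  have hb : ∀ n : ℕ, ‖gS α n‖ * (r:ℝ) ^ n ≤ C * ((r:ℝ) ^ n / (n.factorial : ℝ)) := by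
    intro n
    have hnorm : ‖gS α n‖ = ‖bc α n‖ := FormalMultilinearSeries.ofScalars_norm ℂ (bc α) n
    have hbc : ‖bc α n‖ = 1 / ((n.factorial : ℝ) * ‖Complex.Gamma (α + (n : ℂ) + 1)‖) := by
      rw [bc, norm_div, norm_pow, norm_neg, norm_one, one_pow, norm_mul]
      simp
    have hfac1 : (1:ℝ) ≤ (n.factorial : ℝ) := by exact_mod_cast n.factorial_pos
    have hlb := gamma_lb hre hα n
    have hGn : (0:ℝ) < ‖Complex.Gamma (α + (n:ℂ) + 1)‖ := norm_pos_iff.mpr (gamma_ne hα n)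
    have hfac0 : (0:ℝ) < (n.factorial : ℝ) := by exact_mod_cast n.factorial_pos
    have hkey : ‖bc α n‖ ≤ C / (n.factorial : ℝ) := by
      rw [hbc]
      have h1 : 1 / ((n.factorial:ℝ) * ‖Complex.Gamma (α + (n:ℂ) + 1)‖) ≤
          1 / ((n.factorial:ℝ) * ((n.factorial:ℝ) * ‖Complex.Gamma (α + 1)‖)) :=
        one_div_le_one_div_of_le (by positivity) (mul_le_mul_of_nonneg_left hlb hfac0.le)
      have h2 : 1 / ((n.factorial:ℝ) * ((n.factorial:ℝ) * ‖Complex.Gamma (α + 1)‖)) =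
          (C / (n.factorial:ℝ)) * (1 / (n.factorial:ℝ)) := by
        rw [hC]; field_simp
      have h3 : (C / (n.factorial:ℝ)) * (1 / (n.factorial:ℝ)) ≤ (C / (n.factorial:ℝ)) * 1 := by
        apply mul_le_mul_of_nonneg_left _ (by rw [hC]; positivity)
        rw [div_le_one hfac0] at *
        exact hfac1
      linarith
    calc ‖gS α n‖ * (r:ℝ)^n = ‖bc α n‖ * (r:ℝ)^n := by rw [hnorm]
      _ ≤ (C / (n.factorial : ℝ)) * (r:ℝ)^n := by
          apply mul_le_mul_of_nonneg_right hkey (by positivity)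
      _ = C * ((r:ℝ)^n / (n.factorial : ℝ)) := by ring
  exact Summable.of_nonneg_of_le (fun n => by positivity) hb
    ((Real.summable_pow_div_factorial (r:ℝ)).mul_left C)

end MplAux

namespace MplAux
open FormalMultilinearSeries
variable {α : ℂ}

lemma gg_analyticAt (hre : α.re = 0) (hα : α.im ≠ 0) (y : ℂ) : AnalyticAt ℂ (gg α) y := by
  have h0 : 0 < (gS α).radius := by rw [radius_top hre hα]; exact ENNReal.zero_lt_top
  have h := (gS α).hasFPowerSeriesOnBall h0
  exact (h.analyticAt_of_mem (by rw [radius_top hre hα]; exact edist_lt_top y 0)).congr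
    (Filter.Eventually.of_forall fun z => rfl)

lemma gg_diff (hre : α.re = 0) (hα : α.im ≠ 0) : Differentiable ℂ (gg α) :=
  fun y => (gg_analyticAt hre hα y).differentiableAt

lemma gg_cont (hre : α.re = 0) (hα : α.im ≠ 0) : Continuous (gg α) :=
  (gg_diff hre hα).continuous

lemma gg_deriv_cont (hre : α.re = 0) (hα : α.im ≠ 0) : Continuous (deriv (gg α)) := by
  have h : AnalyticOnNhd ℂ (gg α) Set.univ := fun y _ => gg_analyticAt hre hα y
  have := (h.deriv).continuousOn
  rw [← continuousOn_univ]
  exact this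

end MplAux

namespace MplAux

lemma besselJ_eq (α : ℂ) {x : ℝ} (hx : 0 < x) :
    besselJ α x = Complex.exp (α * (Real.log (x/2) : ℂ)) * gg α ((((x/2)^2 : ℝ) : ℂ)) := by
  rw [besselJ, gg_apply, ← tsum_mul_left]
  apply tsum_congr
  intro n
  have hL : Complex.exp (((Real.log (x/2) : ℝ) : ℂ)) = ((x/2 : ℝ) : ℂ) := by
    rw [← Complex.ofReal_exp, Real.exp_log (by positivity)]
  have h2 : Complex.exp ((α + 2 * (n : ℂ)) * (Real.log (x / 2) : ℂ)) =
      Complex.exp (α * (Real.log (x/2) : ℂ)) * ((((x/2)^2 : ℝ) : ℂ)) ^ n := by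
    rw [show (α + 2 * (n : ℂ)) * (Real.log (x / 2) : ℂ) =
      α * (Real.log (x/2) : ℂ) + n * (2 * (Real.log (x/2) : ℂ)) by ring]
    rw [Complex.exp_add, Complex.exp_nat_mul]
    congr 1
    rw [show (2 : ℂ) * (Real.log (x/2) : ℂ) = (Real.log (x/2) : ℂ) + (Real.log (x/2) : ℂ) by ring,
      Complex.exp_add, hL]
    push_cast
    ring
  rw [h2, bc]
  ring

end MplAux

namespace MplAux

def CC (m R : ℝ) : ℂ := ((Real.exp (-(modeMu m R * Real.pi / 2)) : ℝ) : ℂ)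
def SS (m R : ℝ) : ℂ := Complex.I * Complex.sin (modeNu m R * (Real.pi : ℂ))
def ww (m R : ℝ) : ℂ := Complex.exp (-(Complex.I * (Real.pi : ℂ) * modeNu m R))
def Yc (k s : ℝ) : ℂ := (((k*s/2)^2 : ℝ) : ℂ)
def Lc (k s : ℝ) : ℂ := ((Real.log (k*s/2) : ℝ) : ℂ)

lemma modeV_eq (m R : ℝ) {k s : ℝ} (hk : 0 < k) (hs : 0 < s) :
    modeV m R s k = CC m R * ((s ^ ((3:ℝ)/2) : ℝ) : ℂ) *
      ((gg (-(modeNu m R)) (Yc k s) * Complex.exp (-(modeNu m R * Lc k s))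
        - ww m R * (gg (modeNu m R) (Yc k s) * Complex.exp (modeNu m R * Lc k s))) / SS m R) := by
  have hx : 0 < k * s := mul_pos hk hs
  rw [modeV, hankel1, besselJ_eq _ hx, besselJ_eq _ hx]
  rw [CC, SS, ww, Yc, Lc]
  rw [neg_mul]
  ring

def dV (m R k t : ℝ) : ℂ :=
  CC m R * ( (((3:ℝ)/2 * t ^ ((1:ℝ)/2) : ℝ) : ℂ) *
      ((gg (-(modeNu m R)) (Yc k t) * Complex.exp (-(modeNu m R * Lc k t))
        - ww m R * (gg (modeNu m R) (Yc k t) * Complex.exp (modeNu m R * Lc k t))) / SS m R)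
    + ((t ^ ((1:ℝ)/2) : ℝ) : ℂ) *
      (((deriv (gg (-(modeNu m R))) (Yc k t) * ((k^2*t^2/2 : ℝ) : ℂ)
          - gg (-(modeNu m R)) (Yc k t) * modeNu m R)
            * Complex.exp (-(modeNu m R * Lc k t))
        - ww m R * ((deriv (gg (modeNu m R)) (Yc k t) * ((k^2*t^2/2 : ℝ) : ℂ)
          + gg (modeNu m R) (Yc k t) * modeNu m R)
            * Complex.exp (modeNu m R * Lc k t))) / SS m R) )

lemma nu_re (m R : ℝ) : (modeNu m R).re = 0 := by simp [modeNu]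
lemma nu_im (m R : ℝ) : (modeNu m R).im = modeMu m R := by simp [modeNu]

lemma SS_eq (m R : ℝ) : SS m R = -((Real.sinh (modeMu m R * Real.pi) : ℝ) : ℂ) := by
  rw [SS, modeNu, show Complex.I * (modeMu m R : ℂ) * (Real.pi : ℂ) =
    ((modeMu m R * Real.pi : ℝ) : ℂ) * Complex.I by push_cast; ring, Complex.sin_mul_I,
    Complex.ofReal_sinh]
  rw [show Complex.I * (Complex.sinh ((modeMu m R * Real.pi : ℝ) : ℂ) * Complex.I) =
    Complex.I^2 * Complex.sinh ((modeMu m R * Real.pi : ℝ) : ℂ) by ring, Complex.I_sq]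
  ring

lemma SS_ne (m R : ℝ) (hμ : 0 < modeMu m R) : SS m R ≠ 0 := by
  rw [SS_eq]
  simp only [ne_eq, neg_eq_zero, Complex.ofReal_eq_zero]
  exact (Real.sinh_pos_iff.mpr (by positivity)).ne'

set_option maxHeartbeats 1600000 in
lemma modeV_hasDerivAt (m R : ℝ) (hμ : 0 < modeMu m R) {k t : ℝ} (hk : 0 < k) (ht : 0 < t) :
    HasDerivAt (fun s => modeV m R s k) (dV m R k t) t := by
  set ν := modeNu m R with hν
  have hrem : (-ν).re = 0 := by simp [hν, nu_re]
  have himm : (-ν).im ≠ 0 := by simp [hν, nu_im]; exact hμ.ne'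
  have hrep : ν.re = 0 := nu_re m R
  have himp : ν.im ≠ 0 := by rw [nu_im]; exact hμ.ne'
  -- building blocks
  have hinner : HasDerivAt (fun s : ℝ => k*s/2) (k/2) t := by
    simpa using ((hasDerivAt_id t).const_mul k).div_const 2
  have h1 : HasDerivAt (fun s : ℝ => ((s ^ ((3:ℝ)/2) : ℝ) : ℂ))
      ((((3:ℝ)/2 * t ^ ((1:ℝ)/2) : ℝ) : ℂ)) t := by
    have := (Real.hasDerivAt_rpow_const (x := t) (p := (3:ℝ)/2) (Or.inl ht.ne')).ofReal_comp
    convert this using 2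
    norm_num
  have hYr : HasDerivAt (fun s : ℝ => (k*s/2)^2) (k^2*t/2) t := by
    have := hinner.fun_pow 2
    refine this.congr_deriv ?_
    norm_num; ring
  have hY : HasDerivAt (fun s : ℝ => Yc k s) (((k^2*t/2 : ℝ) : ℂ)) t := hYr.ofReal_comp
  have hLr : HasDerivAt (fun s : ℝ => Real.log (k*s/2)) (t⁻¹) t := by
    have h := hinner.log (by positivity)
    convert h using 1
    field_simp
  have hL : HasDerivAt (fun s : ℝ => Lc k s) (((t⁻¹ : ℝ) : ℂ)) t := hLr.ofReal_comp
  have hgmY : HasDerivAt (fun s : ℝ => gg (-ν) (Yc k s))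
      (deriv (gg (-ν)) (Yc k t) * ((k^2*t/2 : ℝ) : ℂ)) t := by
    have hd : HasDerivAt (gg (-ν)) (deriv (gg (-ν)) (Yc k t)) (Yc k t) :=
      ((gg_diff hrem himm) (Yc k t)).hasDerivAt
    have := HasDerivAt.scomp (𝕜 := ℝ) (𝕜' := ℂ) t hd hY
    simpa [smul_eq_mul, mul_comm, Function.comp_def] using this
  have hgpY : HasDerivAt (fun s : ℝ => gg ν (Yc k s))
      (deriv (gg ν) (Yc k t) * ((k^2*t/2 : ℝ) : ℂ)) t := by
    have hd : HasDerivAt (gg ν) (deriv (gg ν) (Yc k t)) (Yc k t) :=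
      ((gg_diff hrep himp) (Yc k t)).hasDerivAt
    have := HasDerivAt.scomp (𝕜 := ℝ) (𝕜' := ℂ) t hd hY
    simpa [smul_eq_mul, mul_comm, Function.comp_def] using this
  have hEm : HasDerivAt (fun s : ℝ => Complex.exp (-(ν * Lc k s)))
      (Complex.exp (-(ν * Lc k t)) * (-(ν * ((t⁻¹ : ℝ) : ℂ)))) t := by
    exact ((hL.const_mul ν).neg).cexp
  have hEp : HasDerivAt (fun s : ℝ => Complex.exp (ν * Lc k s))
      (Complex.exp (ν * Lc k t) * (ν * ((t⁻¹ : ℝ) : ℂ))) t := by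
    exact (hL.const_mul ν).cexp
  have hT1 := hgmY.fun_mul hEm
  have hT2 := (hgpY.fun_mul hEp).const_mul (ww m R)
  have hInside := ((hT1.fun_sub hT2).div_const (SS m R))
  have hfull := (h1.fun_mul hInside).const_mul (CC m R)
  have heq : (fun s : ℝ => modeV m R s k) =ᶠ[nhds t] (fun s : ℝ =>
      CC m R * (((s ^ ((3:ℝ)/2) : ℝ) : ℂ) *
      ((gg (-ν) (Yc k s) * Complex.exp (-(ν * Lc k s))
        - ww m R * (gg ν (Yc k s) * Complex.exp (ν * Lc k s))) / SS m R))) := by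
    filter_upwards [Ioi_mem_nhds ht] with s hs
    rw [modeV_eq m R hk hs]
    ring
  refine HasDerivAt.congr_of_eventuallyEq ?_ heq
  refine hfull.congr_deriv ?_
  rw [dV, ← hν]
  have htne : (t : ℂ) ≠ 0 := by exact_mod_cast ht.ne'
  have ht32 : t ^ ((3:ℝ)/2) = t * t ^ ((1:ℝ)/2) := by
    rw [show (3:ℝ)/2 = 1 + 1/2 by norm_num, Real.rpow_add ht, Real.rpow_one]
  rw [ht32]
  have hS : SS m R ≠ 0 := SS_ne m R hμ
  push_cast
  field_simp [htne, hS]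
  ring


lemma modeV'_eq (m R : ℝ) (hμ : 0 < modeMu m R) {k t : ℝ} (hk : 0 < k) (ht : 0 < t) :
    modeV' m R t k = dV m R k t := by
  rw [modeV']
  exact (modeV_hasDerivAt m R hμ hk ht).deriv

def tt (m R t : ℝ) : ℂ := Complex.exp (modeNu m R * ((Real.log t : ℝ) : ℂ))
def X1 (m R t k : ℝ) : ℂ := (starRingEnd ℂ) (Complex.exp (-(modeNu m R * Lc k t)))
def X2 (m R t k : ℝ) : ℂ := (starRingEnd ℂ) (Complex.exp (modeNu m R * Lc k t))
def Am (m R k s : ℝ) : ℂ := (starRingEnd ℂ) (gg (-(modeNu m R)) (Yc k s))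
def Ap (m R k s : ℝ) : ℂ := (starRingEnd ℂ) (gg (modeNu m R) (Yc k s))
def Bm (m R k s : ℝ) : ℂ := (starRingEnd ℂ) (deriv (gg (-(modeNu m R))) (Yc k s))
def Bp (m R k s : ℝ) : ℂ := (starRingEnd ℂ) (deriv (gg (modeNu m R)) (Yc k s))
def Fm (m R k s : ℝ) : ℂ :=
  ((3:ℂ)/2 + modeNu m R) * Am m R k s + ((k^2*s^2/2 : ℝ) : ℂ) * Bm m R k s
def Fp (m R k s : ℝ) : ℂ :=
  ((3:ℂ)/2 - modeNu m R) * Ap m R k s + ((k^2*s^2/2 : ℝ) : ℂ) * Bp m R k s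
def c2 (m R : ℝ) : ℂ := (CC m R / (starRingEnd ℂ) (SS m R))^2
def wc (m R : ℝ) : ℂ := (starRingEnd ℂ) (ww m R)
def Pex (m R t k : ℝ) : ℂ := c2 m R * ((t ^ ((3:ℝ)/2) : ℝ) : ℂ) *
  (Am m R k t * Fm m R k 1 - Fm m R k t * Am m R k 1)
def Q1ex (m R t k : ℝ) : ℂ := -(c2 m R * ((t ^ ((3:ℝ)/2) : ℝ) : ℂ) * wc m R) *
  (Am m R k t * Fp m R k 1 - Fm m R k t * Ap m R k 1)
def Q2ex (m R t k : ℝ) : ℂ := -(c2 m R * ((t ^ ((3:ℝ)/2) : ℝ) : ℂ) * wc m R) *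
  (Ap m R k t * Fm m R k 1 - Fp m R k t * Am m R k 1)
def Rex (m R t k : ℝ) : ℂ := c2 m R * ((t ^ ((3:ℝ)/2) : ℝ) : ℂ) * wc m R ^ 2 *
  (Ap m R k t * Fp m R k 1 - Fp m R k t * Ap m R k 1)

lemma conj_nu (m R : ℝ) : (starRingEnd ℂ) (modeNu m R) = -(modeNu m R) := by
  simp [modeNu]

lemma conj_Lc (k s : ℝ) : (starRingEnd ℂ) (Lc k s) = Lc k s := by
  rw [Lc]; exact Complex.conj_ofReal _

lemma conj_CC (m R : ℝ) : (starRingEnd ℂ) (CC m R) = CC m R := by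
  rw [CC]; exact Complex.conj_ofReal _

set_option maxHeartbeats 3200000 in
lemma E_eq (m R : ℝ) (hμ : 0 < modeMu m R) {t k : ℝ} (ht : 0 < t) (hk : 0 < k) :
    (starRingEnd ℂ) (modeV m R t k) * (starRingEnd ℂ) (modeV' m R 1 k) -
      (t : ℂ) * (starRingEnd ℂ) (modeV' m R t k) * (starRingEnd ℂ) (modeV m R 1 k) =
    X1 m R t k * X1 m R 1 k * Pex m R t k + X1 m R t k * X2 m R 1 k * Q1ex m R t k +
      X2 m R t k * X1 m R 1 k * Q2ex m R t k + X2 m R t k * X2 m R 1 k * Rex m R t k := by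
  set ν := modeNu m R with hν
  have hcν : (starRingEnd ℂ) ν = -ν := conj_nu m R
  have ht32 : t ^ ((3:ℝ)/2) = t * t ^ ((1:ℝ)/2) := by
    rw [show (3:ℝ)/2 = 1 + 1/2 by norm_num, Real.rpow_add ht, Real.rpow_one]
  have htne : (t : ℂ) ≠ 0 := by exact_mod_cast ht.ne'
  rw [modeV_eq m R hk ht, modeV_eq m R hk one_pos, modeV'_eq m R hμ hk ht,
    modeV'_eq m R hμ hk one_pos, dV, dV]
  simp only [map_mul, map_sub, map_add, map_div₀, Complex.conj_ofReal, conj_CC, hcν, ← hν]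
  rw [Pex, Q1ex, Q2ex, Rex, Fm, Fm, Fp, Fp]
  simp only [← hν, Real.one_rpow, Real.rpow_one, one_pow, mul_one, one_mul]
  rw [Am, Ap, Bm, Bp, Am, Ap, Bm, Bp, c2, wc, X1, X1, X2, X2, ht32]
  simp only [← hν]
  push_cast
  ring

open Filter Topology

lemma Lc_split {k t : ℝ} (hk : 0 < k) (ht : 0 < t) :
    Lc k t = ((Real.log (k/2) : ℝ) : ℂ) + ((Real.log t : ℝ) : ℂ) := by
  rw [Lc, show k*t/2 = (k/2)*t by ring, Real.log_mul (by positivity) ht.ne']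
  push_cast; ring

lemma Lc_one {k : ℝ} : Lc k 1 = ((Real.log (k/2) : ℝ) : ℂ) := by rw [Lc, mul_one]

lemma X1X2_eq (m R : ℝ) {t k : ℝ} (ht : 0 < t) (hk : 0 < k) :
    X1 m R t k * X2 m R 1 k = tt m R t := by
  rw [X1, X2, ← map_mul, ← Complex.exp_add]
  have h : -(modeNu m R * Lc k t) + modeNu m R * Lc k 1 =
      -(modeNu m R * ((Real.log t : ℝ) : ℂ)) := by
    rw [Lc_split hk ht, Lc_one]; ring
  rw [h, ← Complex.exp_conj, map_neg, map_mul, conj_nu, Complex.conj_ofReal, tt]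
  congr 1; ring

lemma X2X1_eq (m R : ℝ) {t k : ℝ} (ht : 0 < t) (hk : 0 < k) :
    X2 m R t k * X1 m R 1 k = (tt m R t)⁻¹ := by
  rw [X2, X1, ← map_mul, ← Complex.exp_add]
  have h : modeNu m R * Lc k t + -(modeNu m R * Lc k 1) =
      modeNu m R * ((Real.log t : ℝ) : ℂ) := by
    rw [Lc_split hk ht, Lc_one]; ring
  rw [h, ← Complex.exp_conj, map_mul, conj_nu, Complex.conj_ofReal, tt, ← Complex.exp_neg]
  congr 1; ring

lemma norm_X1 (m R t k : ℝ) : ‖X1 m R t k‖ = 1 := by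
  rw [X1, RCLike.norm_conj, Complex.norm_exp]
  have : (-(modeNu m R * Lc k t)).re = 0 := by
    simp [modeNu, Lc, Complex.mul_re]
  rw [this, Real.exp_zero]

lemma norm_X2 (m R t k : ℝ) : ‖X2 m R t k‖ = 1 := by
  rw [X2, RCLike.norm_conj, Complex.norm_exp]
  have : (modeNu m R * Lc k t).re = 0 := by
    simp [modeNu, Lc, Complex.mul_re]
  rw [this, Real.exp_zero]

lemma tendsto_Yc (s : ℝ) :
    Tendsto (fun k : ℝ => Yc k s) (nhdsWithin 0 (Set.Ioi 0)) (nhds 0) := by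
  have hc : Continuous fun k : ℝ => Yc k s := by
    unfold Yc
    exact Complex.continuous_ofReal.comp (by continuity)
  have h0 : Yc 0 s = 0 := by simp [Yc]
  have := hc.tendsto 0
  rw [h0] at this
  exact this.mono_left nhdsWithin_le_nhds

lemma tendsto_coef (s : ℝ) :
    Tendsto (fun k : ℝ => ((k^2*s^2/2 : ℝ) : ℂ)) (nhdsWithin 0 (Set.Ioi 0)) (nhds 0) := by
  have hc : Continuous fun k : ℝ => ((k^2*s^2/2 : ℝ) : ℂ) :=
    Complex.continuous_ofReal.comp (by continuity)
  have := hc.tendsto 0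
  simp only [ne_eq, OfNat.ofNat_ne_zero, not_false_eq_true, zero_pow, zero_mul, zero_div,
    Complex.ofReal_zero] at this
  exact this.mono_left nhdsWithin_le_nhds

def amv (m R : ℝ) : ℂ := (starRingEnd ℂ) (gg (-(modeNu m R)) 0)
def apv (m R : ℝ) : ℂ := (starRingEnd ℂ) (gg (modeNu m R) 0)
def bmv (m R : ℝ) : ℂ := (starRingEnd ℂ) (deriv (gg (-(modeNu m R))) 0)
def bpv (m R : ℝ) : ℂ := (starRingEnd ℂ) (deriv (gg (modeNu m R)) 0)
def FmL (m R : ℝ) : ℂ := ((3:ℂ)/2 + modeNu m R) * amv m R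
def FpL (m R : ℝ) : ℂ := ((3:ℂ)/2 - modeNu m R) * apv m R

section limits
variable (m R : ℝ)

lemma nu_rem : (-(modeNu m R)).re = 0 := by simp [nu_re]
lemma nu_imm (hμ : 0 < modeMu m R) : (-(modeNu m R)).im ≠ 0 := by
  simp [nu_im]; exact hμ.ne'
lemma nu_imp (hμ : 0 < modeMu m R) : (modeNu m R).im ≠ 0 := by
  rw [nu_im]; exact hμ.ne'

lemma tendsto_Am (hμ : 0 < modeMu m R) (s : ℝ) : Tendsto (fun k : ℝ => Am m R k s)
    (nhdsWithin 0 (Set.Ioi 0)) (nhds (amv m R)) := by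
  have hg : Continuous fun y : ℂ => (starRingEnd ℂ) (gg (-(modeNu m R)) y) :=
    continuous_conj.comp (gg_cont (nu_rem m R) (nu_imm m R hμ))
  exact (hg.tendsto 0).comp (tendsto_Yc s)

lemma tendsto_Ap (hμ : 0 < modeMu m R) (s : ℝ) : Tendsto (fun k : ℝ => Ap m R k s)
    (nhdsWithin 0 (Set.Ioi 0)) (nhds (apv m R)) := by
  have hg : Continuous fun y : ℂ => (starRingEnd ℂ) (gg (modeNu m R) y) :=
    continuous_conj.comp (gg_cont (nu_re m R) (nu_imp m R hμ))
  exact (hg.tendsto 0).comp (tendsto_Yc s)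

lemma tendsto_Bm (hμ : 0 < modeMu m R) (s : ℝ) : Tendsto (fun k : ℝ => Bm m R k s)
    (nhdsWithin 0 (Set.Ioi 0)) (nhds (bmv m R)) := by
  have hg : Continuous fun y : ℂ => (starRingEnd ℂ) (deriv (gg (-(modeNu m R))) y) :=
    continuous_conj.comp (gg_deriv_cont (nu_rem m R) (nu_imm m R hμ))
  exact (hg.tendsto 0).comp (tendsto_Yc s)

lemma tendsto_Bp (hμ : 0 < modeMu m R) (s : ℝ) : Tendsto (fun k : ℝ => Bp m R k s)
    (nhdsWithin 0 (Set.Ioi 0)) (nhds (bpv m R)) := by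
  have hg : Continuous fun y : ℂ => (starRingEnd ℂ) (deriv (gg (modeNu m R)) y) :=
    continuous_conj.comp (gg_deriv_cont (nu_re m R) (nu_imp m R hμ))
  exact (hg.tendsto 0).comp (tendsto_Yc s)

lemma tendsto_Fm (hμ : 0 < modeMu m R) (s : ℝ) : Tendsto (fun k : ℝ => Fm m R k s)
    (nhdsWithin 0 (Set.Ioi 0)) (nhds (FmL m R)) := by
  have h := (((tendsto_Am m R hμ s).const_mul ((3:ℂ)/2 + modeNu m R)).add
    ((tendsto_coef s).mul (tendsto_Bm m R hμ s)))
  simp only [zero_mul, add_zero] at h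
  exact h.congr (fun k => by rw [Fm]) |>.mono_right (by rw [FmL])

lemma tendsto_Fp (hμ : 0 < modeMu m R) (s : ℝ) : Tendsto (fun k : ℝ => Fp m R k s)
    (nhdsWithin 0 (Set.Ioi 0)) (nhds (FpL m R)) := by
  have h := (((tendsto_Ap m R hμ s).const_mul ((3:ℂ)/2 - modeNu m R)).add
    ((tendsto_coef s).mul (tendsto_Bp m R hμ s)))
  simp only [zero_mul, add_zero] at h
  exact h.congr (fun k => by rw [Fp]) |>.mono_right (by rw [FpL])

end limits

lemma nu_ne (m R : ℝ) (hμ : 0 < modeMu m R) : modeNu m R ≠ 0 := by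
  rw [modeNu]
  exact mul_ne_zero Complex.I_ne_zero (by exact_mod_cast hμ.ne')

lemma bc_zero_ne (α : ℂ) (hα : α.im ≠ 0) : bc α 0 ≠ 0 := by
  rw [bc]
  simp only [pow_zero, Nat.factorial_zero, Nat.cast_one, one_mul, Nat.cast_zero, add_zero]
  rw [one_div]
  exact inv_ne_zero (by simpa using gamma_ne hα 0)

lemma amv_ne (m R : ℝ) (hμ : 0 < modeMu m R) : amv m R ≠ 0 := by
  rw [amv, gg_zero]
  intro hcontr
  apply bc_zero_ne (-(modeNu m R)) (nu_imm m R hμ)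
  have := congrArg (starRingEnd ℂ) hcontr
  simpa using this

lemma apv_ne (m R : ℝ) (hμ : 0 < modeMu m R) : apv m R ≠ 0 := by
  rw [apv, gg_zero]
  intro hcontr
  apply bc_zero_ne (modeNu m R) (nu_imp m R hμ)
  have := congrArg (starRingEnd ℂ) hcontr
  simpa using this

lemma tt_sub_ne (m R : ℝ) {t : ℝ} (ht : 0 < t)
    (h1 : modeMu m R * Real.log t ≠ 0) (h2 : |modeMu m R * Real.log t| ≤ Real.pi/2) :
    tt m R t - (tt m R t)⁻¹ ≠ 0 := by
  intro h
  have hz : tt m R t ≠ 0 := Complex.exp_ne_zero _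
  have heq := sub_eq_zero.mp h
  have h2' := mul_inv_cancel₀ hz
  rw [← heq] at h2'
  have hexp : Complex.exp (modeNu m R * ((Real.log t : ℝ) : ℂ) +
      modeNu m R * ((Real.log t : ℝ) : ℂ)) = 1 := by
    rw [Complex.exp_add]; exact h2'
  obtain ⟨n, hn⟩ := Complex.exp_eq_one_iff.mp hexp
  have hL : modeNu m R * ((Real.log t : ℝ) : ℂ) + modeNu m R * ((Real.log t : ℝ) : ℂ) =
      ((2*(modeMu m R * Real.log t) : ℝ) : ℂ) * Complex.I := by
    rw [modeNu]; push_cast; ring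
  have hR' : (n : ℂ) * (2 * (Real.pi : ℂ) * Complex.I) =
      ((2*Real.pi*(n : ℝ) : ℝ) : ℂ) * Complex.I := by push_cast; ring
  rw [hL, hR'] at hn
  have hre : (2*(modeMu m R * Real.log t) : ℝ) = 2*Real.pi*(n:ℝ) := by
    have := mul_right_cancel₀ Complex.I_ne_zero hn
    exact_mod_cast this
  rcases eq_or_ne n 0 with hn0 | hn0
  · rw [hn0] at hre
    push_cast at hre
    exact h1 (by linarith)
  · have habs : (1:ℝ) ≤ |(n:ℝ)| := by
      rw [← Int.cast_abs]
      exact_mod_cast Int.one_le_abs hn0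
    have : modeMu m R * Real.log t = Real.pi * (n:ℝ) := by linarith
    rw [this, abs_mul, abs_of_pos Real.pi_pos] at h2
    nlinarith [Real.pi_pos]

lemma choose_t {μ : ℝ} (hμ : 0 < μ) {I : Set ℝ} (hIconn : I.OrdConnected)
    (hIsub : I ⊆ Set.Ioi (0:ℝ)) (h1I : (1:ℝ) ∈ I) {c : ℝ} (hcI : c ∈ I) (hc1 : c ≠ 1) :
    ∃ t ∈ I, 0 < t ∧ μ * Real.log t ≠ 0 ∧ |μ * Real.log t| ≤ Real.pi/2 := by
  set ε := Real.pi/(2*μ) with hε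
  have hεpos : 0 < ε := by rw [hε]; positivity
  rcases lt_or_gt_of_ne hc1 with hc | hc
  · -- c < 1
    refine ⟨max c (Real.exp (-ε)), ?_, ?_, ?_, ?_⟩
    · apply hIconn.out hcI h1I
      constructor
      · exact le_max_left _ _
      · apply max_le hc.le
        rw [Real.exp_le_one_iff]; linarith
    · exact lt_of_lt_of_le (Real.exp_pos _) (le_max_right _ _)
    · have hlt : max c (Real.exp (-ε)) < 1 := by
        apply max_lt hc
        rw [Real.exp_lt_one_iff]; linarith
      have h0 : 0 < max c (Real.exp (-ε)) :=
        lt_of_lt_of_le (Real.exp_pos _) (le_max_right _ _)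
      have : Real.log (max c (Real.exp (-ε))) < 0 := Real.log_neg h0 hlt
      exact mul_ne_zero hμ.ne' this.ne
    · have hge : -ε ≤ Real.log (max c (Real.exp (-ε))) := by
        calc -ε = Real.log (Real.exp (-ε)) := (Real.log_exp _).symm
          _ ≤ _ := Real.log_le_log (Real.exp_pos _) (le_max_right _ _)
      have hlt : max c (Real.exp (-ε)) < 1 := by
        apply max_lt hc
        rw [Real.exp_lt_one_iff]; linarith
      have h0 : 0 < max c (Real.exp (-ε)) :=
        lt_of_lt_of_le (Real.exp_pos _) (le_max_right _ _)
      have hneg : Real.log (max c (Real.exp (-ε))) < 0 := Real.log_neg h0 hlt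
      rw [abs_mul, abs_of_pos hμ, abs_of_neg hneg]
      calc μ * -Real.log (max c (Real.exp (-ε))) ≤ μ * ε := by nlinarith
        _ = Real.pi/2 := by rw [hε]; field_simp
  · -- 1 < c
    refine ⟨min c (Real.exp ε), ?_, ?_, ?_, ?_⟩
    · apply hIconn.out h1I hcI
      constructor
      · apply le_min hc.le
        rw [Real.one_le_exp_iff]; linarith
      · exact min_le_left _ _
    · exact lt_of_lt_of_le one_pos (le_min hc.le (by rw [Real.one_le_exp_iff]; linarith))
    · have hgt : 1 < min c (Real.exp ε) := by
        apply lt_min hc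
        rw [Real.one_lt_exp_iff]; linarith
      have : 0 < Real.log (min c (Real.exp ε)) := Real.log_pos hgt
      exact mul_ne_zero hμ.ne' this.ne'
    · have hgt : 1 < min c (Real.exp ε) := by
        apply lt_min hc
        rw [Real.one_lt_exp_iff]; linarith
      have hle : Real.log (min c (Real.exp ε)) ≤ ε := by
        calc Real.log (min c (Real.exp ε)) ≤ Real.log (Real.exp ε) :=
              Real.log_le_log (lt_trans one_pos hgt) (min_le_right _ _)
          _ = ε := Real.log_exp _
      have hpos : 0 < Real.log (min c (Real.exp ε)) := Real.log_pos hgt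
      rw [abs_mul, abs_of_pos hμ, abs_of_pos hpos]
      calc μ * Real.log (min c (Real.exp ε)) ≤ μ * ε := by nlinarith
        _ = Real.pi/2 := by rw [hε]; field_simp

end MplAux

open MplAux Filter Topology in
theorem multiplier_not_identically_zero' (m R : ℝ) (hm : 0 < m) (hR : 0 < R)
    (hmR : 3 / 2 < m * R) (I : Set ℝ) (hIconn : I.OrdConnected) (hIsub : I ⊆ Set.Ioi (0 : ℝ))
    (h1I : (1 : ℝ) ∈ I) (hnd : ∃ a ∈ I, ∃ b ∈ I, a ≠ b) :
    ∃ t ∈ I, ∃ k : ℝ, 0 < k ∧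
      (starRingEnd ℂ) (modeV m R t k) * (starRingEnd ℂ) (modeV' m R 1 k) -
        (t : ℂ) * (starRingEnd ℂ) (modeV' m R t k) * (starRingEnd ℂ) (modeV m R 1 k) ≠ 0 := by
  have hμ : 0 < modeMu m R := by
    rw [modeMu]
    apply Real.sqrt_pos.mpr
    nlinarith
  -- pick a point of I different from 1
  obtain ⟨c, hcI, hc1⟩ : ∃ c ∈ I, c ≠ 1 := by
    obtain ⟨a, haI, b, hbI, hab⟩ := hnd
    rcases eq_or_ne a 1 with ha | ha
    · exact ⟨b, hbI, by rw [← ha]; exact hab.symm⟩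
    · exact ⟨a, haI, ha⟩
  obtain ⟨t, htI, ht0, hlne, hlle⟩ := choose_t hμ hIconn hIsub h1I hcI hc1
  refine ⟨t, htI, ?_⟩
  by_contra hcon
  push_neg at hcon
  have hEk0 : ∀ k : ℝ, 0 < k →
      (starRingEnd ℂ) (modeV m R t k) * (starRingEnd ℂ) (modeV' m R 1 k) -
        (t : ℂ) * (starRingEnd ℂ) (modeV' m R t k) * (starRingEnd ℂ) (modeV m R 1 k) = 0 :=
    fun k hk => hcon k hk
  set F := nhdsWithin (0:ℝ) (Set.Ioi 0) with hF
  set T : ℂ := ((t ^ ((3:ℝ)/2) : ℝ) : ℂ) with hT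
  set Q1L : ℂ := -(c2 m R * T * wc m R) * (amv m R * FpL m R - FmL m R * apv m R) with hQ1L
  set Q2L : ℂ := -(c2 m R * T * wc m R) * (apv m R * FmL m R - FpL m R * amv m R) with hQ2L
  set Lv : ℂ := tt m R t * Q1L + (tt m R t)⁻¹ * Q2L with hLv
  -- limits of the coefficient functions
  have hQ1 : Tendsto (fun k => Q1ex m R t k) F (𝓝 Q1L) := by
    have := (((tendsto_Am m R hμ t).mul (tendsto_Fp m R hμ 1)).sub
      ((tendsto_Fm m R hμ t).mul (tendsto_Ap m R hμ 1))).const_mul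
        (-(c2 m R * T * wc m R))
    exact this.congr (fun k => by rw [Q1ex, hT])
  have hQ2 : Tendsto (fun k => Q2ex m R t k) F (𝓝 Q2L) := by
    have := (((tendsto_Ap m R hμ t).mul (tendsto_Fm m R hμ 1)).sub
      ((tendsto_Fp m R hμ t).mul (tendsto_Am m R hμ 1))).const_mul
        (-(c2 m R * T * wc m R))
    exact this.congr (fun k => by rw [Q2ex, hT])
  have hP : Tendsto (fun k => Pex m R t k) F (𝓝 0) := by
    have h0 := (((tendsto_Am m R hμ t).mul (tendsto_Fm m R hμ 1)).sub
      ((tendsto_Fm m R hμ t).mul (tendsto_Am m R hμ 1))).const_mul (c2 m R * T)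
    have hz : c2 m R * T * (amv m R * FmL m R - FmL m R * amv m R) = 0 := by ring
    rw [hz] at h0
    exact h0.congr (fun k => by rw [Pex, hT])
  have hRx : Tendsto (fun k => Rex m R t k) F (𝓝 0) := by
    have h0 := (((tendsto_Ap m R hμ t).mul (tendsto_Fp m R hμ 1)).sub
      ((tendsto_Fp m R hμ t).mul (tendsto_Ap m R hμ 1))).const_mul (c2 m R * T * wc m R ^ 2)
    have hz : c2 m R * T * wc m R ^ 2 * (apv m R * FpL m R - FpL m R * apv m R) = 0 := by ring
    rw [hz] at h0
    exact h0.congr (fun k => by rw [Rex, hT])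
  -- oscillatory part tends to zero
  have hPR : Tendsto (fun k => X1 m R t k * X1 m R 1 k * Pex m R t k +
      X2 m R t k * X2 m R 1 k * Rex m R t k) F (𝓝 0) := by
    have hb : ∀ k : ℝ, ‖X1 m R t k * X1 m R 1 k * Pex m R t k +
        X2 m R t k * X2 m R 1 k * Rex m R t k‖ ≤ ‖Pex m R t k‖ + ‖Rex m R t k‖ := by
      intro k
      calc ‖X1 m R t k * X1 m R 1 k * Pex m R t k + X2 m R t k * X2 m R 1 k * Rex m R t k‖
          ≤ ‖X1 m R t k * X1 m R 1 k * Pex m R t k‖ + ‖X2 m R t k * X2 m R 1 k * Rex m R t k‖ :=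
            norm_add_le _ _
        _ = ‖Pex m R t k‖ + ‖Rex m R t k‖ := by
            rw [norm_mul, norm_mul, norm_mul, norm_mul, norm_X1, norm_X1, norm_X2, norm_X2]
            ring
    have hg : Tendsto (fun k : ℝ => ‖Pex m R t k‖ + ‖Rex m R t k‖) F (𝓝 0) := by
      have := (hP.norm).add (hRx.norm)
      simpa using this
    exact squeeze_zero_norm hb hg
  have hmid : Tendsto (fun k => tt m R t * Q1ex m R t k + (tt m R t)⁻¹ * Q2ex m R t k)
      F (𝓝 Lv) := by
    rw [hLv]
    exact (hQ1.const_mul _).add (hQ2.const_mul _)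
  have hsum : Tendsto (fun k => (X1 m R t k * X1 m R 1 k * Pex m R t k +
      X2 m R t k * X2 m R 1 k * Rex m R t k) +
      (tt m R t * Q1ex m R t k + (tt m R t)⁻¹ * Q2ex m R t k)) F (𝓝 Lv) := by
    have := hPR.add hmid
    simpa using this
  -- the function is eventually equal to the zero function and to the decomposition
  have hEdec : ∀ᶠ k in F, (starRingEnd ℂ) (modeV m R t k) * (starRingEnd ℂ) (modeV' m R 1 k) -
      (t : ℂ) * (starRingEnd ℂ) (modeV' m R t k) * (starRingEnd ℂ) (modeV m R 1 k) =
      (X1 m R t k * X1 m R 1 k * Pex m R t k + X2 m R t k * X2 m R 1 k * Rex m R t k) +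
      (tt m R t * Q1ex m R t k + (tt m R t)⁻¹ * Q2ex m R t k) := by
    filter_upwards [self_mem_nhdsWithin] with k hk
    rw [E_eq m R hμ ht0 hk, ← X2X1_eq m R ht0 hk, ← X1X2_eq m R ht0 hk]
    ring
  have hElim : Tendsto (fun k => (starRingEnd ℂ) (modeV m R t k) *
      (starRingEnd ℂ) (modeV' m R 1 k) - (t : ℂ) * (starRingEnd ℂ) (modeV' m R t k) *
      (starRingEnd ℂ) (modeV m R 1 k)) F (𝓝 Lv) :=
    hsum.congr' (by filter_upwards [hEdec] with k hk; rw [hk])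
  have hE0 : Tendsto (fun k => (starRingEnd ℂ) (modeV m R t k) *
      (starRingEnd ℂ) (modeV' m R 1 k) - (t : ℂ) * (starRingEnd ℂ) (modeV' m R t k) *
      (starRingEnd ℂ) (modeV m R 1 k)) F (𝓝 0) := by
    have hev : (fun _ : ℝ => (0:ℂ)) =ᶠ[F]
        (fun k => (starRingEnd ℂ) (modeV m R t k) * (starRingEnd ℂ) (modeV' m R 1 k) -
          (t : ℂ) * (starRingEnd ℂ) (modeV' m R t k) * (starRingEnd ℂ) (modeV m R 1 k)) := by
      filter_upwards [self_mem_nhdsWithin] with k hk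
      exact (hEk0 k hk).symm
    exact Tendsto.congr' hev tendsto_const_nhds
  have hLv0 : Lv = 0 := tendsto_nhds_unique hElim hE0
  -- but Lv ≠ 0
  have hLvform : Lv = c2 m R * T * wc m R * (2 * modeNu m R) * amv m R * apv m R *
      (tt m R t - (tt m R t)⁻¹) := by
    rw [hLv, hQ1L, hQ2L, FmL, FpL]; ring
  have hCCne : CC m R ≠ 0 := by
    rw [CC]
    exact Complex.ofReal_ne_zero.mpr (Real.exp_ne_zero _)
  have hScne : (starRingEnd ℂ) (SS m R) ≠ 0 := by
    intro hcontr
    apply SS_ne m R hμ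
    have := congrArg (starRingEnd ℂ) hcontr
    simpa using this
  have hc2ne : c2 m R ≠ 0 := by
    rw [c2]
    exact pow_ne_zero _ (div_ne_zero hCCne hScne)
  have hTne : T ≠ 0 := by
    rw [hT]
    exact Complex.ofReal_ne_zero.mpr (Real.rpow_pos_of_pos ht0 _).ne'
  have hwcne : wc m R ≠ 0 := by
    rw [wc]
    intro hcontr
    apply Complex.exp_ne_zero (-(Complex.I * (Real.pi : ℂ) * modeNu m R))
    have := congrArg (starRingEnd ℂ) hcontr
    simpa [ww] using this
  have hLvne : Lv ≠ 0 := by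
    rw [hLvform]
    apply mul_ne_zero
    apply mul_ne_zero
    apply mul_ne_zero
    apply mul_ne_zero
    apply mul_ne_zero
    exact mul_ne_zero hc2ne hTne
    exact hwcne
    exact mul_ne_zero two_ne_zero (nu_ne m R hμ)
    exact amv_ne m R hμ
    exact apv_ne m R hμ
    exact tt_sub_ne m R ht0 hlne hlle
  exact hLvne hLv0


end MplAuxSection

/-- on no nondegenerate interval `I ⊆ (0,∞)` containing `1` does the
multiplier `conj(v(t,k))·conj(v′(1,k)) − t·conj(v′(t,k))·conj(v(1,k))` vanish identically:
there exist `t ∈ I` and `k > 0` where it is nonzero. -/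
theorem multiplier_not_identically_zero (m R : ℝ) (hm : 0 < m) (hR : 0 < R)
    (hmR : 3 / 2 < m * R) (I : Set ℝ) (hIconn : I.OrdConnected) (hIsub : I ⊆ Set.Ioi (0 : ℝ))
    (h1I : (1 : ℝ) ∈ I) (hnd : ∃ a ∈ I, ∃ b ∈ I, a ≠ b) :
    ∃ t ∈ I, ∃ k : ℝ, 0 < k ∧
      (starRingEnd ℂ) (modeV m R t k) * (starRingEnd ℂ) (modeV' m R 1 k) -
        (t : ℂ) * (starRingEnd ℂ) (modeV' m R t k) * (starRingEnd ℂ) (modeV m R 1 k) ≠ 0 :=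
  multiplier_not_identically_zero' m R hm hR hmR I hIconn hIsub h1I hnd
end
end

section
/- For every Schwartz function g : ℝ³ → ℂ, the twelve-dimensional integral ∫_{ℝ³}∫_{ℝ³}∫_{ℝ³}∫_{ℝ³} (1+|p⃗₁|)^{−1}·|g(p⃗₁−p⃗₂)|·(1+|p⃗₂|)^{−1}·|g(p⃗₂−p⃗₃)|·(1+|p⃗₃|)^{−1}·|g(p⃗₃−p⃗₄)|·(1+|p⃗₄|)^{−1}·|g(p⃗₄−p⃗₁)| dp⃗₁ dp⃗₂ dp⃗₃ dp⃗₄ is finite. (This is the estimate showing that the transformed potential operator V̂(s) has finite Schatten-4 norm, used to control the higher-order Dyson terms in Hilbert–Schmidt norm.) -/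
open Complex MeasureTheory Filter
open scoped RealInnerProductSpace

noncomputable section

lemma peetre_inv (x y : V3) : (1 + ‖y‖)⁻¹ ≤ (1 + ‖x - y‖) * (1 + ‖x‖)⁻¹ := by
  have h1 : (0:ℝ) < 1 + ‖x‖ := by positivity
  have h2 : (0:ℝ) < 1 + ‖y‖ := by positivity
  have h3 : ‖x‖ ≤ ‖x - y‖ + ‖y‖ := by
    calc ‖x‖ = ‖(x - y) + y‖ := by rw [sub_add_cancel]
    _ ≤ ‖x - y‖ + ‖y‖ := norm_add_le _ _
  have h4 : 1 / (1 + ‖y‖) ≤ (1 + ‖x - y‖) / (1 + ‖x‖) :=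
    (div_le_div_iff₀ h2 h1).mpr (by nlinarith [norm_nonneg (x - y), norm_nonneg y])
  simpa [one_div, div_eq_mul_inv] using h4

lemma mp_shear : MeasurePreserving (fun q : V3 × V3 => (q.1, q.1 - q.2)) volume volume := by
  have m1 : MeasurePreserving (fun q : V3 × V3 => (q.1, -q.2)) volume volume := by
    rw [Measure.volume_eq_prod]
    exact (MeasurePreserving.id _).prod (Measure.measurePreserving_neg _)
  have m2 : MeasurePreserving (fun q : V3 × V3 => (q.1, q.2 + q.1)) volume volume := by
    rw [Measure.volume_eq_prod]
    exact measurePreserving_prod_add_right _ _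
  have h := m2.comp m1
  have he : (fun q : V3 × V3 => (q.1, q.1 - q.2)) =
      (fun q : V3 × V3 => (q.1, q.2 + q.1)) ∘ (fun q : V3 × V3 => (q.1, -q.2)) := by
    funext q; simp [Function.comp, sub_eq_neg_add]
  rw [he]; exact h

lemma mp_gb (b : V3) :
    MeasurePreserving (fun r : V3 × V3 => (b - r.1, r.1 - r.2)) volume volume := by
  have m2 : MeasurePreserving (fun q : V3 × V3 => (b - q.1, q.2)) volume volume := by
    rw [Measure.volume_eq_prod]
    exact (Measure.measurePreserving_sub_left volume b).prod (MeasurePreserving.id _)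
  have h := m2.comp mp_shear
  have he : (fun r : V3 × V3 => (b - r.1, r.1 - r.2)) =
      (fun q : V3 × V3 => (b - q.1, q.2)) ∘ (fun q : V3 × V3 => (q.1, q.1 - q.2)) := by
    funext q; simp [Function.comp]
  rw [he]; exact h

lemma mpT : MeasurePreserving
    (fun p : (V3 × V3) × V3 × V3 =>
      ((p.1.1, p.1.1 - p.1.2), (p.1.2 - p.2.1, p.2.1 - p.2.2)))
    volume volume := by
  rw [Measure.volume_eq_prod]
  exact mp_shear.skew_product (g := fun (q : V3 × V3) (r : V3 × V3) => (q.2 - r.1, r.1 - r.2))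
    ((measurable_fst.snd.sub measurable_snd.fst).prodMk
      (measurable_snd.fst.sub measurable_snd.snd))
    (ae_of_all _ fun q => (mp_gb q.2).map_eq)

/-- for a Schwartz function `g` on `ℝ³`, the twelve-dimensional integral
`∫∫∫∫ (1+|p₁|)⁻¹|g(p₁−p₂)|(1+|p₂|)⁻¹|g(p₂−p₃)|(1+|p₃|)⁻¹|g(p₃−p₄)|(1+|p₄|)⁻¹|g(p₄−p₁)|`
is finite. -/
theorem schatten_four_integral_finite (g : SchwartzMap V3 ℂ) :
    Integrable (fun p : (V3 × V3) × V3 × V3 =>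
      (1 + ‖p.1.1‖)⁻¹ * ‖g (p.1.1 - p.1.2)‖ * ((1 + ‖p.1.2‖)⁻¹ * ‖g (p.1.2 - p.2.1)‖) *
        ((1 + ‖p.2.1‖)⁻¹ * ‖g (p.2.1 - p.2.2)‖) * ((1 + ‖p.2.2‖)⁻¹ * ‖g (p.2.2 - p.1.1)‖))
      volume := by
  obtain ⟨C, hC⟩ : ∃ C : ℝ, ∀ x : V3, (1 + ‖x‖) ^ 7 * ‖g x‖ ≤ C := by
    refine ⟨2 ^ 7 * (Finset.Iic ((7:ℕ),(0:ℕ))).sup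
      (fun m => SchwartzMap.seminorm ℝ m.1 m.2) g, fun x => ?_⟩
    simpa [norm_iteratedFDeriv_zero] using
      SchwartzMap.one_add_le_sup_seminorm_apply (𝕜 := ℝ) (m := ((7:ℕ),(0:ℕ))) le_rfl le_rfl g x
  have hC0 : 0 ≤ C := le_trans (by positivity) (hC 0)
  set w : V3 → ℝ := fun x => (1 + ‖x‖) ^ (-(4:ℝ)) with hw_def
  have hw_int : Integrable w := by
    apply integrable_one_add_norm (E := V3)
    simp [finrank_euclideanSpace_fin]; norm_num
  have hw_eq : ∀ x : V3, w x = ((1 + ‖x‖)⁻¹) ^ 4 := by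
    intro x
    have h4 : ((4:ℝ)) = ((4:ℕ):ℝ) := by norm_num
    have hrfl : w x = (1 + ‖x‖) ^ (-(4:ℝ)) := rfl
    rw [hrfl, Real.rpow_neg (by positivity), h4, Real.rpow_natCast, inv_pow]
  have hw0 : ∀ x : V3, 0 ≤ w x := fun x => by rw [hw_def]; positivity
  have hw_cont : Continuous w :=
    (continuous_const.add continuous_norm).rpow_const (fun x => Or.inl (add_pos_of_pos_of_nonneg one_pos (norm_nonneg x)).ne')
  -- decay estimates
  have hG : ∀ j : ℕ, j ≤ 3 → ∀ x : V3, (1 + ‖x‖) ^ j * ‖g x‖ ≤ C * w x := by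
    intro j hj x
    have h1 : (0:ℝ) < 1 + ‖x‖ := by positivity
    have h2 : (1 + ‖x‖) ^ j * ‖g x‖ * (1 + ‖x‖) ^ 4 ≤ C := by
      calc (1 + ‖x‖) ^ j * ‖g x‖ * (1 + ‖x‖) ^ 4
          ≤ (1 + ‖x‖) ^ 3 * ‖g x‖ * (1 + ‖x‖) ^ 4 := by
            have hp : (1 + ‖x‖) ^ j ≤ (1 + ‖x‖) ^ 3 :=
              pow_le_pow_right₀ (by linarith [norm_nonneg x]) hj
            exact mul_le_mul_of_nonneg_right
              (mul_le_mul_of_nonneg_right hp (norm_nonneg (g x))) (by positivity)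
      _ = (1 + ‖x‖) ^ 7 * ‖g x‖ := by ring
      _ ≤ C := hC x
    rw [← le_div_iff₀ (by positivity : (0:ℝ) < (1 + ‖x‖) ^ 4)] at h2
    calc (1 + ‖x‖) ^ j * ‖g x‖ ≤ C / (1 + ‖x‖) ^ 4 := h2
    _ = C * ((1 + ‖x‖)⁻¹) ^ 4 := by rw [div_eq_mul_inv, inv_pow]
    _ = C * w x := by rw [hw_eq x]
  have hG0 : ∀ x : V3, ‖g x‖ ≤ C := by
    intro x
    refine le_trans ?_ (hC x)
    have h1 : (1:ℝ) ≤ (1 + ‖x‖) ^ 7 := one_le_pow₀ (by linarith [norm_nonneg x])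
    nlinarith [norm_nonneg (g x)]
  -- the dominating function
  have hF : Integrable
      (fun q : (V3 × V3) × V3 × V3 => (w q.1.1 * w q.1.2) * (w q.2.1 * w q.2.2)) volume := by
    have h2 : Integrable (fun q : V3 × V3 => w q.1 * w q.2) volume := by
      rw [Measure.volume_eq_prod]; exact hw_int.mul_prod hw_int
    rw [Measure.volume_eq_prod]; exact h2.mul_prod h2
  have hD : Integrable (fun p : (V3 × V3) × V3 × V3 =>
      C ^ 4 * ((w p.1.1 * w (p.1.1 - p.1.2)) * (w (p.1.2 - p.2.1) * w (p.2.1 - p.2.2)))) := by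
    have h := (mpT.integrable_comp hF.aestronglyMeasurable).2 hF
    exact h.const_mul (C ^ 4)
  refine Integrable.mono' hD ?_ (ae_of_all _ ?_)
  · -- measurability
    have haux : Measurable fun x : V3 => (1 + ‖x‖)⁻¹ :=
      ((measurable_const.add measurable_norm).inv)
    have hgc : Measurable fun x : V3 => ‖g x‖ := g.continuous.norm.measurable
    have c11 : Measurable fun p : (V3 × V3) × V3 × V3 => p.1.1 := measurable_fst.fst
    have c12 : Measurable fun p : (V3 × V3) × V3 × V3 => p.1.2 := measurable_fst.snd
    have c21 : Measurable fun p : (V3 × V3) × V3 × V3 => p.2.1 := measurable_snd.fst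
    have c22 : Measurable fun p : (V3 × V3) × V3 × V3 => p.2.2 := measurable_snd.snd
    exact (((((haux.comp c11).mul (hgc.comp (c11.sub c12))).mul
      ((haux.comp c12).mul (hgc.comp (c12.sub c21)))).mul
      ((haux.comp c21).mul (hgc.comp (c21.sub c22)))).mul
      ((haux.comp c22).mul (hgc.comp (c22.sub c11)))).aestronglyMeasurable
  · -- the pointwise bound
    rintro ⟨⟨a, b⟩, c, d⟩
    simp only
    rw [Real.norm_of_nonneg (by positivity)]
    have hb' : (1 + ‖b‖)⁻¹ ≤ (1 + ‖a - b‖) * (1 + ‖a‖)⁻¹ := peetre_inv a b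
    have hc' : (1 + ‖c‖)⁻¹ ≤ (1 + ‖b - c‖) * ((1 + ‖a - b‖) * (1 + ‖a‖)⁻¹) := by
      refine le_trans (peetre_inv b c) ?_
      exact mul_le_mul_of_nonneg_left hb' (by positivity)
    have hd' : (1 + ‖d‖)⁻¹ ≤ (1 + ‖c - d‖) * ((1 + ‖b - c‖) * ((1 + ‖a - b‖) * (1 + ‖a‖)⁻¹)) := by
      refine le_trans (peetre_inv c d) ?_
      exact mul_le_mul_of_nonneg_left hc' (by positivity)
    calc (1 + ‖a‖)⁻¹ * ‖g (a - b)‖ * ((1 + ‖b‖)⁻¹ * ‖g (b - c)‖) *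
          ((1 + ‖c‖)⁻¹ * ‖g (c - d)‖) * ((1 + ‖d‖)⁻¹ * ‖g (d - a)‖)
        ≤ (1 + ‖a‖)⁻¹ * ‖g (a - b)‖ *
          (((1 + ‖a - b‖) * (1 + ‖a‖)⁻¹) * ‖g (b - c)‖) *
          (((1 + ‖b - c‖) * ((1 + ‖a - b‖) * (1 + ‖a‖)⁻¹)) * ‖g (c - d)‖) *
          (((1 + ‖c - d‖) * ((1 + ‖b - c‖) * ((1 + ‖a - b‖) * (1 + ‖a‖)⁻¹))) * ‖g (d - a)‖) := by
          gcongr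
    _ = ((1 + ‖a‖)⁻¹) ^ 4 *
          (((1 + ‖a - b‖) ^ 3 * ‖g (a - b)‖) * ((1 + ‖b - c‖) ^ 2 * ‖g (b - c)‖) *
            ((1 + ‖c - d‖) ^ 1 * ‖g (c - d)‖) * ‖g (d - a)‖) := by ring
    _ ≤ ((1 + ‖a‖)⁻¹) ^ 4 *
          ((C * w (a - b)) * (C * w (b - c)) * (C * w (c - d)) * C) := by
          refine mul_le_mul_of_nonneg_left ?_ (by positivity)
          have n1 : (0:ℝ) ≤ C * w (a - b) := mul_nonneg hC0 (hw0 _)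
          have n2 : (0:ℝ) ≤ C * w (b - c) := mul_nonneg hC0 (hw0 _)
          have n3 : (0:ℝ) ≤ C * w (c - d) := mul_nonneg hC0 (hw0 _)
          have s12 := mul_le_mul (hG 3 le_rfl (a - b)) (hG 2 (by norm_num) (b - c))
            (by positivity) n1
          have s123 := mul_le_mul s12 (hG 1 (by norm_num) (c - d)) (by positivity)
            (mul_nonneg n1 n2)
          exact mul_le_mul s123 (hG0 (d - a)) (norm_nonneg _)
            (mul_nonneg (mul_nonneg n1 n2) n3)
    _ = C ^ 4 * ((w a * w (a - b)) * (w (b - c) * w (c - d))) := by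
          rw [← hw_eq a]; ring
end
end
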